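/- arXiv:1312.4639 — 4 statements merged into one kernel-verified Lean document; each statement's English description precedes it below -/
import Mathlib

section
/- For all natural numbers m, k ≥ 1 and r ≥ 1 there exists a natural number n such that for every coloring c : FIN_k(n) → {0,…,r−1} there exists a block sequence (f_i)_{i<m} of length m of elements of FIN_k(n) such that c is constant on the combinatorial space ⟨f_i⟩_{i<m}. -/
/-- `f` is a member of `FIN_k`: finitely supported `ℕ`-valued function with
values `≤ k` that attains the value `k`. -/
def IsFINk (k : ℕ) (f : ℕ →₀ ℕ) : Prop :=
  (∀ n, f n ≤ k) ∧ (∃ n, f n = k)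

/-- `FIN_k(N)`: the members of `FIN_k` supported inside `{0, …, N-1}`. -/
def FINkN (k N : ℕ) : Set (ℕ →₀ ℕ) :=
  {f | IsFINk k f ∧ ∀ n ∈ f.support, n < N}

/-- The block relation `f < g`: the support of `f` lies entirely below the support of `g`. -/
def Blk (f g : ℕ →₀ ℕ) : Prop :=
  ∀ i ∈ f.support, ∀ j ∈ g.support, i < j

/-- The Tetris operation `(T f)(x) = max {0, f x - 1}`. -/
noncomputable def Tetris (f : ℕ →₀ ℕ) : ℕ →₀ ℕ :=
  Finsupp.mapRange (· - 1) (by simp) f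

/-- `(F i)_{i<m}` is a block sequence of length `m`. -/
def IsBlockSeqFin (m : ℕ) (F : ℕ → (ℕ →₀ ℕ)) : Prop :=
  ∀ i j : ℕ, i < j → j < m → Blk (F i) (F j)

/-- `(G i)_{i<d}` is a block sequence (a `d`-tuple version). -/
def IsBlockTuple (d : ℕ) (G : Fin d → (ℕ →₀ ℕ)) : Prop :=
  ∀ i j : Fin d, i < j → Blk (G i) (G j)

/-- The combinatorial space `⟨F i⟩_{i<m}` generated by a block sequence `(F i)_{i<m}`:
all sums `T^{l_1}(f_{i_1}) + … + T^{l_p}(f_{i_p})` with `i_1 < … < i_p < m` and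
`min {l_1, …, l_p} = 0`. -/
def CombSpace (m : ℕ) (F : ℕ → (ℕ →₀ ℕ)) : Set (ℕ →₀ ℕ) :=
  {g | ∃ (s : Finset ℕ) (l : ℕ → ℕ), s.Nonempty ∧ (∀ i ∈ s, i < m) ∧
      (∃ i ∈ s, l i = 0) ∧ g = ∑ i ∈ s, Tetris^[l i] (F i)}

open Filter Set

attribute [local instance] Ultrafilter.add Ultrafilter.addSemigroup

abbrev MM := ℕ →₀ ℕ

lemma tetris_apply (f : MM) (x : ℕ) : Tetris f x = f x - 1 := rfl

lemma tetris_iter_apply (l : ℕ) (f : MM) (x : ℕ) : (Tetris^[l] f) x = f x - l := by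
  induction l generalizing f with
  | zero => simp
  | succ n ih =>
    rw [Function.iterate_succ_apply, ih, tetris_apply]
    omega

lemma tetris_iter_support (l : ℕ) (f : MM) : (Tetris^[l] f).support ⊆ f.support := by
  intro x hx
  simp only [Finsupp.mem_support_iff] at *
  rw [tetris_iter_apply] at hx
  omega

lemma tetris_support (f : MM) : (Tetris f).support ⊆ f.support := tetris_iter_support 1 f

/-- pointwise-disjointness version of additivity of iterated Tetris. -/
lemma tetris_iter_add (l : ℕ) (f g : MM) (h : ∀ x, f x = 0 ∨ g x = 0) :
    Tetris^[l] (f + g) = Tetris^[l] f + Tetris^[l] g := by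
  ext x
  simp only [Finsupp.add_apply, tetris_iter_apply]
  rcases h x with h' | h' <;> simp [h']

lemma tetris_add (f g : MM) (h : ∀ x, f x = 0 ∨ g x = 0) :
    Tetris (f + g) = Tetris f + Tetris g := tetris_iter_add 1 f g h

lemma isFINk_zero_iff (f : MM) : IsFINk 0 f ↔ f = 0 := by
  constructor
  · rintro ⟨h1, -⟩
    ext x; simpa using h1 x
  · rintro rfl
    exact ⟨fun n => by simp, ⟨0, by simp⟩⟩

lemma isFINk_add {a b : ℕ} {f g : MM} (hf : IsFINk a f) (hg : IsFINk b g)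
    (h : ∀ x, f x = 0 ∨ g x = 0) : IsFINk (max a b) (f + g) := by
  obtain ⟨hf1, nf, hnf⟩ := hf
  obtain ⟨hg1, ng, hng⟩ := hg
  constructor
  · intro n
    have := hf1 n; have := hg1 n
    rcases h n with h' | h' <;> simp only [Finsupp.add_apply, h'] <;> omega
  · rcases le_total a b with hab | hab
    · rcases Nat.eq_zero_or_pos b with rfl | hb
      · exact ⟨nf, by have := hg1 nf; simp only [Finsupp.add_apply]; omega⟩
      · have hgng : f ng = 0 := by rcases h ng with h' | h' <;> omega
        exact ⟨ng, by simp only [Finsupp.add_apply]; omega⟩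
    · rcases Nat.eq_zero_or_pos a with rfl | ha
      · exact ⟨ng, by have := hf1 ng; simp only [Finsupp.add_apply]; omega⟩
      · have hfnf : g nf = 0 := by rcases h nf with h' | h' <;> omega
        exact ⟨nf, by simp only [Finsupp.add_apply]; omega⟩

lemma isFINk_tetris_iter {j : ℕ} {f : MM} (hf : IsFINk j f) (l : ℕ) :
    IsFINk (j - l) (Tetris^[l] f) := by
  obtain ⟨h1, n, hn⟩ := hf
  exact ⟨fun x => by rw [tetris_iter_apply]; have := h1 x; omega,
    ⟨n, by rw [tetris_iter_apply, hn]⟩⟩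

lemma tetris_iter_eq_zero {k : ℕ} {f : MM} (hf : ∀ n, f n ≤ k) {l : ℕ} (hl : k ≤ l) :
    Tetris^[l] f = 0 := by
  ext x; rw [tetris_iter_apply]; have := hf x; simp; omega

lemma tetris_iter_min {k : ℕ} {f : MM} (hf : ∀ n, f n ≤ k) (l : ℕ) :
    Tetris^[min l k] f = Tetris^[l] f := by
  ext x; rw [tetris_iter_apply, tetris_iter_apply]; have := hf x; omega

-- ===== Part 2: ultrafilter layer =====

/-- ultrafilters all of whose members contain elements with arbitrarily high support -/
def Gam : Set (Ultrafilter MM) := {V | ∀ N : ℕ, {f : MM | ∀ i ∈ f.support, N ≤ i} ∈ V}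

def SU (j : ℕ) : Set (Ultrafilter MM) := {V | V ∈ Gam ∧ {f | IsFINk j f} ∈ V}

lemma pure_zero_mem_SU : (pure 0 : Ultrafilter MM) ∈ SU 0 := by
  constructor
  · intro N
    simp [Ultrafilter.mem_pure]
  · simp [Ultrafilter.mem_pure, isFINk_zero_iff]

lemma blk_of_support_ge {f g : MM} (b : ℕ) (hf : ∀ i ∈ f.support, i < b)
    (hg : ∀ i ∈ g.support, b ≤ i) : Blk f g := fun i hi j hj => lt_of_lt_of_le (hf i hi) (hg j hj)

lemma eventually_blk {W : Ultrafilter MM} (hW : W ∈ Gam) (f : MM) :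
    {g | Blk f g} ∈ W := by
  refine mem_of_superset (hW (f.support.sup id + 1)) ?_
  intro g hg
  refine blk_of_support_ge (f.support.sup id + 1) (fun i hi => ?_) hg
  have : i ≤ f.support.sup id := by simpa using Finset.le_sup (f := id) hi
  omega

lemma blk_pointwise {f g : MM} (h : Blk f g) : ∀ x, f x = 0 ∨ g x = 0 := by
  intro x
  by_contra hc
  push_neg at hc
  exact lt_irrefl x (h x (Finsupp.mem_support_iff.mpr hc.1) x (Finsupp.mem_support_iff.mpr hc.2))

lemma Gam_add {V W : Ultrafilter MM} (hV : V ∈ Gam) (hW : W ∈ Gam) : V + W ∈ Gam := by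
  intro N
  show {x | {y | x + y ∈ _} ∈ W} ∈ V
  refine mem_of_superset (hV N) fun f hf => ?_
  refine mem_of_superset (inter_mem (hW N) (eventually_blk hW f)) ?_
  rintro g ⟨hg, hblk⟩
  intro i hi
  have := Finsupp.support_add hi
  simp only [Finset.mem_union] at this
  rcases this with h' | h'
  · exact hf i h'
  · exact hg i h'

lemma SU_add {a b : ℕ} {V W : Ultrafilter MM} (hV : V ∈ SU a) (hW : W ∈ SU b) :
    V + W ∈ SU (max a b) := by
  refine ⟨Gam_add hV.1 hW.1, ?_⟩
  show {x | {y | x + y ∈ _} ∈ W} ∈ V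
  refine mem_of_superset hV.2 fun f hf => ?_
  refine mem_of_superset (inter_mem hW.2 (eventually_blk hW.1 f)) ?_
  rintro g ⟨hg, hblk⟩
  exact isFINk_add hf hg (blk_pointwise hblk)

noncomputable def TU : Ultrafilter MM → Ultrafilter MM := Ultrafilter.map Tetris

lemma TU_inner {W : Ultrafilter MM} (hW : W ∈ Gam) (f : MM) (A : Set MM) :
    ({g | Tetris (f + g) ∈ A} ∈ W ↔ {g | Tetris f + Tetris g ∈ A} ∈ W) := by
  constructor
  · intro h
    refine mem_of_superset (inter_mem h (eventually_blk hW f)) ?_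
    rintro g ⟨hg, hblk⟩
    simp only [mem_setOf_eq] at hg ⊢
    rwa [tetris_add f g (blk_pointwise hblk)] at hg
  · intro h
    refine mem_of_superset (inter_mem h (eventually_blk hW f)) ?_
    rintro g ⟨hg, hblk⟩
    simp only [mem_setOf_eq] at hg ⊢
    rwa [tetris_add f g (blk_pointwise hblk)]

lemma TU_add {V W : Ultrafilter MM} (hW : W ∈ Gam) : TU (V + W) = TU V + TU W := by
  apply Ultrafilter.coe_injective
  apply Filter.ext
  intro A
  have h1 : A ∈ TU (V + W) ↔ {f | {g | Tetris (f + g) ∈ A} ∈ W} ∈ V := Iff.rfl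
  have h2 : A ∈ TU V + TU W ↔ {f | {g | Tetris f + Tetris g ∈ A} ∈ W} ∈ V := Iff.rfl
  rw [Ultrafilter.mem_coe, Ultrafilter.mem_coe, h1, h2]
  constructor
  · intro h
    refine mem_of_superset h fun f hf => ?_
    exact (TU_inner hW f A).mp hf
  · intro h
    refine mem_of_superset h fun f hf => ?_
    exact (TU_inner hW f A).mpr hf

lemma pure_zero_add (V : Ultrafilter MM) : (pure 0 : Ultrafilter MM) + V = V := by
  apply Ultrafilter.coe_injective
  apply Filter.ext
  intro A
  have h1 : A ∈ (pure 0 : Ultrafilter MM) + V ↔ {y : MM | 0 + y ∈ A} ∈ V := by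
    show {x | {y | x + y ∈ A} ∈ V} ∈ (pure 0 : Ultrafilter MM) ↔ _
    simp [Ultrafilter.mem_pure]
  rw [Ultrafilter.mem_coe, Ultrafilter.mem_coe, h1]
  simp

lemma add_pure_zero (V : Ultrafilter MM) : V + (pure 0 : Ultrafilter MM) = V := by
  apply Ultrafilter.coe_injective
  apply Filter.ext
  intro A
  have h1 : A ∈ V + (pure 0 : Ultrafilter MM) ↔ {x : MM | x + 0 ∈ A} ∈ V := by
    show {x | {y | x + y ∈ A} ∈ (pure 0 : Ultrafilter MM)} ∈ V ↔ _
    simp [Ultrafilter.mem_pure]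
  rw [Ultrafilter.mem_coe, Ultrafilter.mem_coe, h1]
  simp

lemma TU_pure_zero : TU (pure 0) = (pure 0 : Ultrafilter MM) := by
  have h : Tetris (0 : MM) = 0 := by ext x; rw [tetris_apply]; simp
  show Ultrafilter.map Tetris (pure 0) = pure 0
  rw [Ultrafilter.map_pure, h]

-- ===== Part 3: the chain of idempotents =====

lemma map_eq_pure_of_eventually {α β : Type*} {U : Ultrafilter α} {g : α → β} {c : β}
    (h : {x | g x = c} ∈ U) : Ultrafilter.map g U = pure c := by
  apply Ultrafilter.coe_injective
  apply Filter.ext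
  intro A
  rw [Ultrafilter.coe_map, Filter.mem_map, Ultrafilter.mem_coe, Ultrafilter.mem_coe,
    Ultrafilter.mem_pure]
  constructor
  · intro hA
    obtain ⟨x, hx1, hx2⟩ := Ultrafilter.nonempty_of_mem (inter_mem hA h)
    rw [← hx2]; exact hx1
  · intro hA
    refine mem_of_superset h fun x hx => ?_
    show g x ∈ A
    rw [hx]; exact hA

lemma TU_SU_one {V : Ultrafilter MM} (hV : {f : MM | IsFINk 1 f} ∈ V) : TU V = pure 0 := by
  refine map_eq_pure_of_eventually (mem_of_superset hV fun f hf => ?_)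
  show Tetris f = 0
  ext x
  rw [tetris_apply]
  have := hf.1 x
  simp; omega

lemma isClosed_SU (j : ℕ) : IsClosed (SU j) := by
  have h1 : IsClosed Gam := by
    have : Gam = ⋂ N : ℕ, {V : Ultrafilter MM | {f : MM | ∀ i ∈ f.support, N ≤ i} ∈ V} := by
      ext V; simp [Gam, Set.mem_iInter]
    rw [this]
    exact isClosed_iInter fun N => ultrafilter_isClosed_basic _
  exact h1.inter (ultrafilter_isClosed_basic _)

lemma continuous_TU : Continuous TU := by
  refine ultrafilterBasis_is_basis.continuous_iff.2 <| Set.forall_mem_range.mpr fun s ↦ ?_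
  convert ultrafilter_isOpen_basic (Tetris ⁻¹' s) using 1
  ext u; exact Iff.rfl

noncomputable def sigmaUp (f : MM) : MM :=
  Finsupp.mapRange (fun x => if x = 0 then 0 else x + 1) (by simp) f

lemma sigmaUp_apply (f : MM) (x : ℕ) : sigmaUp f x = if f x = 0 then 0 else f x + 1 := rfl

lemma tetris_sigmaUp (f : MM) : Tetris (sigmaUp f) = f := by
  ext x
  rw [tetris_apply, sigmaUp_apply]
  split <;> omega

lemma sigmaUp_support (f : MM) : (sigmaUp f).support ⊆ f.support := by
  intro x hx
  simp only [Finsupp.mem_support_iff] at *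
  rw [sigmaUp_apply] at hx
  intro h; rw [h] at hx; simp at hx

lemma isFINk_sigmaUp {j : ℕ} (hj : 1 ≤ j) {f : MM} (hf : IsFINk j f) :
    IsFINk (j + 1) (sigmaUp f) := by
  obtain ⟨h1, n, hn⟩ := hf
  constructor
  · intro x
    rw [sigmaUp_apply]
    have := h1 x
    split <;> omega
  · refine ⟨n, ?_⟩
    rw [sigmaUp_apply, hn]
    have : j ≠ 0 := by omega
    simp [this]

noncomputable def V1base : Ultrafilter MM := Ultrafilter.map (fun n => Finsupp.single n 1) (Filter.hyperfilter ℕ)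

lemma V1base_mem_SU : V1base ∈ SU 1 := by
  constructor
  · intro N
    show {n : ℕ | ∀ i ∈ (Finsupp.single n (1:ℕ)).support, N ≤ i} ∈ Filter.hyperfilter ℕ
    have hbig : {n : ℕ | N ≤ n} ∈ Filter.hyperfilter ℕ := by
      refine Filter.mem_hyperfilter_of_finite_compl ?_
      have h2 : {n : ℕ | N ≤ n}ᶜ = Set.Iio N := by ext n; simp [Set.mem_Iio]
      rw [h2]
      exact Set.finite_Iio N
    refine mem_of_superset hbig (fun n (hn : N ≤ n) => ?_)
    intro i hi
    rw [Finsupp.support_single_ne_zero n one_ne_zero] at hi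
    simp at hi
    omega
  · show {n : ℕ | IsFINk 1 (Finsupp.single n 1)} ∈ Filter.hyperfilter ℕ
    refine Filter.univ_mem' fun n => ?_
    constructor
    · intro x
      rw [Finsupp.single_apply]
      split <;> omega
    · exact ⟨n, by simp⟩

lemma TU_V1base : TU V1base = pure 0 := TU_SU_one V1base_mem_SU.2

/-- the chain of idempotent ultrafilters -/
structure GoodChain (k : ℕ) (UU : ℕ → Ultrafilter MM) : Prop where
  zero : UU 0 = pure 0
  mem : ∀ j ≤ k, UU j ∈ SU j
  tu : ∀ j, 1 ≤ j → j ≤ k → TU (UU j) = UU (j - 1)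
  absorb : ∀ a ≤ k, ∀ b ≤ k, UU a + UU b = UU (max a b)

lemma goodChain_exists (k : ℕ) : ∃ UU : ℕ → Ultrafilter MM, GoodChain k UU := by
  induction k with
  | zero =>
    refine ⟨fun _ => pure 0, ?_, ?_, ?_, ?_⟩
    · rfl
    · intro j hj
      obtain rfl : j = 0 := by omega
      exact pure_zero_mem_SU
    · intro j h1 h2; omega
    · intro a _ b _
      exact pure_zero_add _
  | succ k ih =>
    obtain ⟨UU, hc⟩ := ih
    -- a base ultrafilter V₀ ∈ SU (k+1) with TU V₀ = UU k
    have hV0 : ∃ V₀, V₀ ∈ SU (k + 1) ∧ TU V₀ = UU k := by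
      rcases Nat.eq_zero_or_pos k with rfl | hk
      · exact ⟨V1base, V1base_mem_SU, by rw [TU_V1base, hc.zero]⟩
      · refine ⟨Ultrafilter.map sigmaUp (UU k), ⟨?_, ?_⟩, ?_⟩
        · intro N
          show sigmaUp ⁻¹' _ ∈ UU k
          refine mem_of_superset ((hc.mem k le_rfl).1 N) fun f hf => ?_
          intro i hi
          exact hf i (sigmaUp_support f hi)
        · show sigmaUp ⁻¹' _ ∈ UU k
          refine mem_of_superset ((hc.mem k le_rfl).2) fun f hf => ?_
          exact isFINk_sigmaUp hk hf
        · show Ultrafilter.map Tetris (Ultrafilter.map sigmaUp (UU k)) = UU k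
          rw [Ultrafilter.map_map]
          have : Tetris ∘ sigmaUp = id := funext tetris_sigmaUp
          rw [this, Ultrafilter.map_id]
    obtain ⟨V₀, hV₀SU, hV₀TU⟩ := hV0
    set Cset : Set (Ultrafilter MM) :=
      {V | V ∈ SU (k + 1) ∧ TU V = UU k ∧ ∀ i ≤ k, V + UU i = V} with hCset
    have hW₀ : V₀ + UU k ∈ Cset := by
      refine ⟨?_, ?_, ?_⟩
      · have := SU_add hV₀SU (hc.mem k le_rfl)
        simpa using this
      · rw [TU_add (hc.mem k le_rfl).1, hV₀TU]
        rcases Nat.eq_zero_or_pos k with rfl | hk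
        · rw [hc.zero, TU_pure_zero, pure_zero_add]
        · rw [hc.tu k hk le_rfl]
          have := hc.absorb k le_rfl (k-1) (by omega)
          rw [this]
          congr 1
          omega
      · intro i hi
        rw [add_assoc, hc.absorb k le_rfl i hi]
        congr 2
        omega
    have hclosed : IsClosed Cset := by
      have heq : Cset = SU (k+1) ∩ ({V | TU V = UU k} ∩
          ⋂ i, ⋂ (_ : i ≤ k), {V | V + UU i = V}) := by
        ext V
        simp only [hCset, Set.mem_setOf_eq, Set.mem_inter_iff, Set.mem_iInter]
        try tauto
      rw [heq]
      refine (isClosed_SU (k+1)).inter (IsClosed.inter ?_ ?_)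
      · exact isClosed_eq continuous_TU continuous_const
      · refine isClosed_iInter fun i => isClosed_iInter fun _ => ?_
        exact isClosed_eq (Ultrafilter.continuous_add_left (UU i)) continuous_id
    have hsub : ∀ V ∈ Cset, ∀ V' ∈ Cset, V + V' ∈ Cset := by
      rintro V ⟨hV1, hV2, hV3⟩ V' ⟨hV'1, hV'2, hV'3⟩
      refine ⟨by simpa using SU_add hV1 hV'1, ?_, ?_⟩
      · rw [TU_add hV'1.1, hV2, hV'2, hc.absorb k le_rfl k le_rfl]
        simp
      · intro i hi
        rw [add_assoc, hV'3 i hi]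
    obtain ⟨V₁, hV₁mem, hV₁idem⟩ := exists_idempotent_in_compact_add_subsemigroup
      (fun r => Ultrafilter.continuous_add_left r) Cset ⟨_, hW₀⟩ hclosed.isCompact hsub
    obtain ⟨hV₁SU, hV₁TU, hV₁abs⟩ := hV₁mem
    refine ⟨fun j => if j = k + 1 then UU k + V₁ else UU j, ?_, ?_, ?_, ?_⟩
    · simp [hc.zero]
    · intro j hj
      by_cases h : j = k + 1
      · subst h
        simp only [if_pos rfl, if_true]
        have := SU_add (hc.mem k le_rfl) hV₁SU
        simpa using this
      · simp only [if_neg h]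
        exact hc.mem j (by omega)
    · intro j h1 h2
      by_cases h : j = k + 1
      · subst h
        simp only [if_pos rfl, if_true, Nat.add_sub_cancel, if_neg (by omega : ¬ k = k + 1)]
        rw [TU_add hV₁SU.1, hV₁TU]
        rcases Nat.eq_zero_or_pos k with rfl | hk
        · rw [hc.zero, TU_pure_zero, pure_zero_add]
        · rw [hc.tu k hk le_rfl, hc.absorb (k-1) (by omega) k le_rfl]
          congr 1
          omega
      · have hj' : j ≤ k := by omega
        simp only [if_neg h, if_neg (by omega : ¬ j - 1 = k + 1)]
        exact hc.tu j h1 hj'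
    · intro a ha b hb
      by_cases hA : a = k + 1 <;> by_cases hB : b = k + 1
      · subst hA; subst hB
        simp only [if_pos rfl, if_true, max_self]
        rw [add_assoc, ← add_assoc V₁ (UU k) V₁, hV₁abs k le_rfl, hV₁idem]
      · subst hA
        have hb' : b ≤ k := by omega
        simp only [if_pos rfl, if_true, if_neg hB, if_pos (by omega : max (k+1) b = k + 1)]
        rw [add_assoc, hV₁abs b hb']
      · subst hB
        have ha' : a ≤ k := by omega
        simp only [if_neg hA, if_pos rfl, if_true, if_pos (by omega : max a (k+1) = k + 1)]
        rw [← add_assoc, hc.absorb a ha' k le_rfl]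
        congr 2
        omega
      · have ha' : a ≤ k := by omega
        have hb' : b ≤ k := by omega
        simp only [if_neg hA, if_neg hB, if_neg (by omega : ¬ max a b = k + 1)]
        exact hc.absorb a ha' b hb'

-- ===== Part 4: star sets =====

noncomputable def CC (k : ℕ) (UU : ℕ → Ultrafilter MM) (A : Set MM) : ℕ → Set MM
  | t =>
    (((if t = 0 then A else Set.univ) ∩
        ⋂ t' : Fin t, {g | {h | g + h ∈ CC k UU A t'.val} ∈ UU (k - t'.val)})) ∩
      ⋂ j' : Fin (k - t + 1),
        {g | {h | g + h ∈ (if t = 0 then A else Set.univ) ∩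
          ⋂ t' : Fin t, {g' | {h' | g' + h' ∈ CC k UU A t'.val} ∈ UU (k - t'.val)}} ∈ UU j'.val}
  termination_by t => t
  decreasing_by all_goals exact t'.isLt

/-- the `D` part of `CC` -/
noncomputable def DD (k : ℕ) (UU : ℕ → Ultrafilter MM) (A : Set MM) (t : ℕ) : Set MM :=
  (if t = 0 then A else Set.univ) ∩
    ⋂ t' : Fin t, {g | {h | g + h ∈ CC k UU A t'.val} ∈ UU (k - t'.val)}

lemma CC_eq (k : ℕ) (UU : ℕ → Ultrafilter MM) (A : Set MM) (t : ℕ) :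
    CC k UU A t = DD k UU A t ∩
      ⋂ j' : Fin (k - t + 1), {g | {h | g + h ∈ DD k UU A t} ∈ UU j'.val} := by
  rw [CC, DD]

section StarLemmas

variable {k : ℕ} {UU : ℕ → Ultrafilter MM} {A : Set MM}

lemma mem_add_iff (U V : Ultrafilter MM) (B : Set MM) :
    B ∈ U + V ↔ {x | {y | x + y ∈ B} ∈ V} ∈ U := Iff.rfl

lemma absorb_mem (hch : GoodChain k UU) {a b : ℕ} (ha : a ≤ k) (hb : b ≤ k) (hab : a ≤ b)
    {B : Set MM} (hB : B ∈ UU b) : {x : MM | {y | x + y ∈ B} ∈ UU b} ∈ UU a := by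
  have habs : UU a + UU b = UU b := by
    rw [hch.absorb a ha b hb, max_eq_right hab]
  rw [show UU b = UU a + UU b from habs.symm] at hB
  exact hB

lemma absorb_mem' (hch : GoodChain k UU) {a b : ℕ} (ha : a ≤ k) (hb : b ≤ k) (hab : b ≤ a)
    {B : Set MM} (hB : B ∈ UU a) : {x : MM | {y | x + y ∈ B} ∈ UU b} ∈ UU a := by
  have habs : UU a + UU b = UU a := by
    rw [hch.absorb a ha b hb, max_eq_left hab]
  rw [show UU a = UU a + UU b from habs.symm] at hB
  exact hB

lemma DD_CC_mem (hch : GoodChain k UU) (hA : A ∈ UU k) :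
    ∀ t, t ≤ k → DD k UU A t ∈ UU (k - t) ∧ CC k UU A t ∈ UU (k - t) := by
  intro t
  induction t using Nat.strong_induction_on with
  | _ t ih =>
    intro ht
    have hD : DD k UU A t ∈ UU (k - t) := by
      refine inter_mem ?_ ?_
      · rcases Nat.eq_zero_or_pos t with rfl | ht0
        · simpa using hA
        · rw [if_neg (by omega : ¬ t = 0)]
          exact univ_mem
      · refine iInter_mem.2 fun t' => ?_
        have hIH : CC k UU A t'.val ∈ UU (k - t'.val) := (ih t'.val t'.isLt (by omega)).2
        exact absorb_mem hch (by omega) (by omega) (by omega) hIH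
    refine ⟨hD, ?_⟩
    rw [CC_eq]
    refine inter_mem hD (iInter_mem.2 fun j' => ?_)
    have hj' : j'.val ≤ k - t := by omega
    exact absorb_mem' hch (by omega) (by omega) hj' hD

lemma CC_star (hch : GoodChain k UU) (hA : A ∈ UU k) :
    ∀ t, t ≤ k → ∀ j', j' ≤ k → ∀ g ∈ CC k UU A t,
      {h | g + h ∈ CC k UU A (min t (k - j'))} ∈ UU j' := by
  intro t ht j' hj' g hg
  rw [CC_eq] at hg
  obtain ⟨hgD, hgS⟩ := hg
  rw [Set.mem_iInter] at hgS
  by_cases hcase : j' ≤ k - t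
  · -- same-level-or-lower extension: target is CC t itself
    have hmin : min t (k - j') = t := by omega
    rw [hmin]
    have ha : {h | g + h ∈ DD k UU A t} ∈ UU j' := hgS ⟨j', by omega⟩
    have hb : ∀ j'' : Fin (k - t + 1),
        {h | {h2 | (g + h) + h2 ∈ DD k UU A t} ∈ UU j''.val} ∈ UU j' := by
      intro j''
      have hbb : {x | g + x ∈ DD k UU A t} ∈ UU (max j' j''.val) := hgS ⟨max j' j''.val, by omega⟩
      have habs : UU j' + UU j''.val = UU (max j' j''.val) :=
        hch.absorb j' hj' j''.val (by omega)
      rw [← habs] at hbb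
      have hbb2 : {h : MM | {h2 | g + (h + h2) ∈ DD k UU A t} ∈ UU j''.val} ∈ UU j' := hbb
      have : {h : MM | {h2 | g + (h + h2) ∈ DD k UU A t} ∈ UU j''.val}
          = {h : MM | {h2 | (g + h) + h2 ∈ DD k UU A t} ∈ UU j''.val} := by
        simp only [add_assoc]
      rwa [this] at hbb2
    refine mem_of_superset (inter_mem ha (iInter_mem.2 hb)) ?_
    intro h hh
    obtain ⟨h1, h2⟩ := hh
    rw [Set.mem_iInter] at h2
    rw [Set.mem_setOf_eq, CC_eq]
    exact ⟨h1, Set.mem_iInter.2 fun j'' => h2 j''⟩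
  · -- strictly higher-level extension: target comes from the D part
    have hmin : min t (k - j') = k - j' := by omega
    rw [hmin]
    have htt : k - j' < t := by omega
    have := Set.mem_iInter.mp hgD.2 ⟨k - j', htt⟩
    have hkj : k - (k - j') = j' := by omega
    rw [hkj] at this
    exact this

lemma zero_mem_CC (hch : GoodChain k UU) (hA : A ∈ UU k) (hk : 1 ≤ k) :
    (0 : MM) ∈ CC k UU A k := by
  have hD : (0 : MM) ∈ DD k UU A k := by
    constructor
    · rw [if_neg (by omega : ¬ k = 0)]
      trivial
    · refine Set.mem_iInter.2 fun t' => ?_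
      have := (DD_CC_mem hch hA t'.val (by omega)).2
      show {h | 0 + h ∈ CC k UU A t'.val} ∈ UU (k - t'.val)
      simpa using this
  rw [CC_eq]
  refine ⟨hD, Set.mem_iInter.2 fun j' => ?_⟩
  have hj0 : j'.val = 0 := by omega
  show {h | 0 + h ∈ DD k UU A k} ∈ UU j'.val
  rw [hj0, hch.zero]
  rw [Ultrafilter.mem_pure]
  simpa using hD

lemma CC_zero_subset : CC k UU A 0 ⊆ A := by
  rw [CC_eq]
  intro g hg
  have := hg.1.1
  simpa using this

end StarLemmas

-- ===== Part 5: building the block sequence =====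

open scoped Classical in
/-- states (partial combinations with their CC-index) generated by a (reversed) list -/
noncomputable def GSl (k : ℕ) : List MM → Finset (MM × ℕ)
  | [] => {((0 : MM), k)}
  | f :: rest => GSl k rest ∪ (GSl k rest ×ˢ Finset.range (k + 1)).image
      (fun p => (p.1.1 + Tetris^[p.2] f, min p.1.2 p.2))

section Build

variable {k : ℕ} {UU : ℕ → Ultrafilter MM} {A : Set MM}

lemma TU_iter (hch : GoodChain k UU) : ∀ l ≤ k, Ultrafilter.map (Tetris^[l]) (UU k) = UU (k - l) := by
  intro l
  induction l with
  | zero =>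
    intro _
    rw [Function.iterate_zero, Ultrafilter.map_id]
    simp
  | succ l ih =>
    intro hl
    rw [Function.iterate_succ']
    rw [show Ultrafilter.map (Tetris ∘ Tetris^[l]) (UU k)
        = Ultrafilter.map Tetris (Ultrafilter.map (Tetris^[l]) (UU k)) from
      (Ultrafilter.map_map _ _ _).symm]
    rw [ih (by omega)]
    show TU (UU (k - l)) = UU (k - (l + 1))
    rw [hch.tu (k - l) (by omega) (by omega)]
    congr 1

structure GoodList (k : ℕ) (UU : ℕ → Ultrafilter MM) (A : Set MM) (R : List MM) : Prop where
  fin : ∀ f ∈ R, IsFINk k f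
  blk : R.Pairwise (fun a b => Blk b a)
  states : ∀ p ∈ GSl k R, p.2 ≤ k ∧ p.1 ∈ CC k UU A p.2

lemma goodList_nil (hch : GoodChain k UU) (hA : A ∈ UU k) (hk : 1 ≤ k) :
    GoodList k UU A [] := by
  refine ⟨by simp, List.Pairwise.nil, ?_⟩
  intro p hp
  have : p = ((0 : MM), k) := by simpa [GSl] using hp
  subst this
  exact ⟨le_rfl, zero_mem_CC hch hA hk⟩

lemma list_sup_bound (R : List MM) (f : MM) (hf : f ∈ R) :
    f.support.sup id ≤ (R.map (fun g => g.support.sup id)).foldr max 0 := by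
  induction R with
  | nil => simp at hf
  | cons a rest ih =>
    rcases List.mem_cons.mp hf with rfl | hf'
    · simp only [List.map_cons, List.foldr_cons]
      exact le_max_left _ _
    · simp only [List.map_cons, List.foldr_cons]
      exact le_max_of_le_right (ih hf')

lemma goodList_step (hch : GoodChain k UU) (hA : A ∈ UU k) (hk : 1 ≤ k)
    {R : List MM} (hR : GoodList k UU A R) : ∃ hh : MM, GoodList k UU A (hh :: R) := by
  set bnd := (R.map (fun g => g.support.sup id)).foldr max 0 + 1 with hbnd
  have hbig : ({f | IsFINk k f} ∩ {f : MM | ∀ i ∈ f.support, bnd ≤ i} ∩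
      ⋂ p ∈ (GSl k R : Set (MM × ℕ)), ⋂ l ∈ (Finset.range (k+1) : Set ℕ),
        {hh : MM | p.1 + Tetris^[l] hh ∈ CC k UU A (min p.2 l)}) ∈ UU k := by
    refine inter_mem (inter_mem (hch.mem k le_rfl).2 ((hch.mem k le_rfl).1 bnd)) ?_
    rw [Filter.biInter_mem (Finset.finite_toSet _)]
    intro p hp
    rw [Filter.biInter_mem (Finset.finite_toSet _)]
    intro l hl
    have hlk : l ≤ k := by simpa using Finset.mem_range_succ_iff.mp (by simpa using hl)
    obtain ⟨hp2, hp1⟩ := hR.states p (by simpa using hp)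
    have hstar := CC_star hch hA p.2 hp2 (k - l) (by omega) p.1 hp1
    have hmin : min p.2 (k - (k - l)) = min p.2 l := by omega
    rw [hmin] at hstar
    have hmap := TU_iter hch l hlk
    have h5 : {h' | p.1 + h' ∈ CC k UU A (min p.2 l)} ∈ Ultrafilter.map (Tetris^[l]) (UU k) := by
      rw [hmap]
      exact hstar
    rw [Ultrafilter.mem_map] at h5
    exact h5
  obtain ⟨hh, hhmem⟩ := Ultrafilter.nonempty_of_mem hbig
  obtain ⟨⟨hh1, hh2⟩, hh3⟩ := hhmem
  refine ⟨hh, ⟨?_, ?_, ?_⟩⟩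
  · intro f hf
    rcases List.mem_cons.mp hf with rfl | hf'
    · exact hh1
    · exact hR.fin f hf'
  · rw [List.pairwise_cons]
    refine ⟨fun f hf => ?_, hR.blk⟩
    refine blk_of_support_ge bnd (fun i hi => ?_) hh2
    have := list_sup_bound R f hf
    have h2 : i ≤ f.support.sup id := by simpa using Finset.le_sup (f := id) hi
    omega
  · intro p hp
    rw [show GSl k (hh :: R) = GSl k R ∪ (GSl k R ×ˢ Finset.range (k + 1)).image
        (fun p => (p.1.1 + Tetris^[p.2] hh, min p.1.2 p.2)) from by rw [GSl]] at hp
    rcases Finset.mem_union.mp hp with hold | hnew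
    · exact hR.states p hold
    · obtain ⟨q, hq, rfl⟩ := Finset.mem_image.mp hnew
      obtain ⟨hq1, hq2⟩ := Finset.mem_product.mp hq
      have hl : q.2 ≤ k := Finset.mem_range_succ_iff.mp hq2
      have := Set.mem_iInter₂.mp (Set.mem_iInter₂.mp hh3 q.1 (by simpa using hq1)) q.2
        (by simpa using hq2)
      refine ⟨by simp [le_trans (min_le_right _ _) hl], this⟩
  
lemma goodList_exists (hch : GoodChain k UU) (hA : A ∈ UU k) (hk : 1 ≤ k) (m : ℕ) :
    ∃ R : List MM, R.length = m ∧ GoodList k UU A R := by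
  induction m with
  | zero => exact ⟨[], rfl, goodList_nil hch hA hk⟩
  | succ m ih =>
    obtain ⟨R, hlen, hR⟩ := ih
    obtain ⟨hh, hR'⟩ := goodList_step hch hA hk hR
    exact ⟨hh :: R, by simp [hlen], hR'⟩

end Build

-- ===== Part 6: completeness of the states, and the per-coloring theorem =====

lemma GSl_complete (k : ℕ) (R : List MM) :
    ∀ s : Finset ℕ, (∀ i ∈ s, i < R.length) → ∀ l : ℕ → ℕ, (∀ i, l i ≤ k) →
      ((∑ i ∈ s, Tetris^[l i] (R.reverse.getD i 0)), s.fold min k l) ∈ GSl k R := by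
  induction R with
  | nil =>
    intro s hs l hl
    have : s = ∅ := Finset.eq_empty_of_forall_notMem (fun i hi => by simpa using hs i hi)
    subst this
    simp [GSl]
  | cons f rest ih =>
    intro s hs l hl
    have hrev : (f :: rest).reverse = rest.reverse ++ [f] := by simp
    have hgetlt : ∀ i < rest.length, (f :: rest).reverse.getD i 0 = rest.reverse.getD i 0 := by
      intro i hi
      rw [hrev, List.getD_append _ _ _ _ (by simpa using hi)]
    have hgetn : (f :: rest).reverse.getD rest.length 0 = f := by
      rw [hrev, List.getD_append_right _ _ _ _ (by simp), List.length_reverse]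
      simp
    rw [show GSl k (f :: rest) = GSl k rest ∪ (GSl k rest ×ˢ Finset.range (k + 1)).image
        (fun p => (p.1.1 + Tetris^[p.2] f, min p.1.2 p.2)) from by rw [GSl]]
    by_cases hn : rest.length ∈ s
    · set s' := s.erase rest.length with hs'
      have hs'lt : ∀ i ∈ s', i < rest.length := by
        intro i hi
        have h1 := Finset.mem_of_mem_erase hi
        have h2 := Finset.ne_of_mem_erase hi
        have := hs i h1
        simp at this
        omega
      have hsum : ∑ i ∈ s, Tetris^[l i] ((f :: rest).reverse.getD i 0)
          = (∑ i ∈ s', Tetris^[l i] (rest.reverse.getD i 0)) + Tetris^[l rest.length] f := by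
        rw [← Finset.sum_erase_add s _ hn, hgetn]
        congr 1
        refine Finset.sum_congr rfl fun i hi => ?_
        rw [hgetlt i (hs'lt i hi)]
      have hfold : s.fold min k l = min (s'.fold min k l) (l rest.length) := by
        conv_lhs => rw [← Finset.insert_erase hn]
        rw [Finset.fold_insert (Finset.notMem_erase _ _)]
        rw [min_comm]
      rw [hsum, hfold]
      refine Finset.mem_union_right _ (Finset.mem_image.mpr ?_)
      refine ⟨((∑ i ∈ s', Tetris^[l i] (rest.reverse.getD i 0), s'.fold min k l), l rest.length), ?_, rfl⟩
      rw [Finset.mem_product]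
      exact ⟨ih s' hs'lt l hl, Finset.mem_range_succ_iff.mpr (hl _)⟩
    · have hslt : ∀ i ∈ s, i < rest.length := by
        intro i hi
        have := hs i hi
        simp at this
        have : i ≠ rest.length := fun h => hn (h ▸ hi)
        omega
      have hsum : ∑ i ∈ s, Tetris^[l i] ((f :: rest).reverse.getD i 0)
          = ∑ i ∈ s, Tetris^[l i] (rest.reverse.getD i 0) := by
        refine Finset.sum_congr rfl fun i hi => ?_
        rw [hgetlt i (hslt i hi)]
      rw [hsum]
      exact Finset.mem_union_left _ (ih s hslt l hl)

/-- Per-coloring version: for every coloring of everything there is a block sequence of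
length `m` whose combinatorial space is monochromatic. -/
theorem percolor (m k r : ℕ) (hk : 1 ≤ k) (c : MM → Fin r) :
    ∃ (F : ℕ → MM) (v : Fin r),
      (∀ i < m, IsFINk k (F i)) ∧ IsBlockSeqFin m F ∧ (∀ g ∈ CombSpace m F, c g = v) := by
  obtain ⟨UU, hch⟩ := goodChain_exists k
  have hFIN : {f : MM | IsFINk k f} ∈ UU k := (hch.mem k le_rfl).2
  have hcover : {f : MM | IsFINk k f} =
      ⋃ v ∈ (Set.univ : Set (Fin r)), {f : MM | IsFINk k f ∧ c f = v} := by
    ext f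
    simp only [Set.mem_setOf_eq, Set.mem_iUnion, Set.mem_univ, exists_prop, true_and]
    exact ⟨fun h => ⟨c f, h, rfl⟩, fun ⟨v, h, _⟩ => h⟩
  rw [hcover] at hFIN
  obtain ⟨v, -, hA⟩ := (Ultrafilter.finite_biUnion_mem_iff (Set.finite_univ)).mp hFIN
  set A := {f : MM | IsFINk k f ∧ c f = v} with hAdef
  obtain ⟨R, hlen, hR⟩ := goodList_exists hch hA hk m
  set F : ℕ → MM := fun i => R.reverse.getD i 0 with hF
  have hFmem : ∀ i < m, F i ∈ R := by
    intro i him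
    have hi : i < R.reverse.length := by simp [hlen, him]
    rw [hF]
    simp only
    rw [List.getD_eq_getElem _ _ hi]
    have := List.getElem_mem hi
    rwa [List.mem_reverse] at this
  refine ⟨F, v, ?_, ?_, ?_⟩
  · exact fun i him => hR.fin _ (hFmem i him)
  · intro i j hij hjm
    have hpw : R.reverse.Pairwise Blk := by
      rw [List.pairwise_reverse]
      exact hR.blk
    have hi : i < R.reverse.length := by simp [hlen]; omega
    have hj : j < R.reverse.length := by simp [hlen]; omega
    have := List.pairwise_iff_get.mp hpw ⟨i, hi⟩ ⟨j, hj⟩ hij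
    rw [hF]
    simp only
    rw [List.getD_eq_getElem _ _ hi, List.getD_eq_getElem _ _ hj]
    simpa [List.get_eq_getElem] using this
  · rintro g ⟨s, l, hne, hlt, ⟨i0, hi0s, hi00⟩, rfl⟩
    set l' : ℕ → ℕ := fun i => min (l i) k with hl'
    have hsum : ∑ i ∈ s, Tetris^[l i] (F i) = ∑ i ∈ s, Tetris^[l' i] (F i) := by
      refine Finset.sum_congr rfl fun i hi => ?_
      have hFi : IsFINk k (F i) := hR.fin _ (hFmem i (hlt i hi))
      rw [hl']
      simp only
      rw [tetris_iter_min hFi.1]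
    have hcomp := GSl_complete k R s (fun i hi => by rw [hlen]; exact hlt i hi) l'
      (fun i => min_le_right _ _)
    have hfold : s.fold min k l' = 0 := by
      have h1 : s.fold min k l' ≤ l' i0 := by
        rw [Finset.fold_min_le]
        exact Or.inr ⟨i0, hi0s, le_rfl⟩
      have : l' i0 = 0 := by simp [hl', hi00]
      omega
    rw [hfold] at hcomp
    have hstate := (hR.states _ hcomp).2
    have hg : (∑ i ∈ s, Tetris^[l' i] (F i)) ∈ A := CC_zero_subset hstate
    rw [hsum]
    exact hg.2

-- ===== Part 7: finiteness of the combinatorial space, and the final theorem =====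

noncomputable def encSum (m k : ℕ) (F : ℕ → MM) (v : Fin m → Fin (k + 2)) : MM :=
  ∑ i : Fin m, if (v i : ℕ) ≤ k then Tetris^[(v i : ℕ)] (F i.val) else 0

lemma combSpace_finite (m k : ℕ) (F : ℕ → MM) (hF : ∀ i < m, IsFINk k (F i)) :
    (CombSpace m F).Finite := by
  classical
  have hsub : CombSpace m F ⊆ Set.range (encSum m k F) := by
    rintro g ⟨s, l, hne, hlt, -, rfl⟩
    have hss : s ⊆ Finset.range m := fun i hi => Finset.mem_range.mpr (hlt i hi)
    refine ⟨fun i => if i.val ∈ s then ⟨min (l i.val) k, by omega⟩ else ⟨k + 1, by omega⟩, ?_⟩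
    rw [encSum]
    have h1 : ∀ i : Fin m,
        (if ((if i.val ∈ s then (⟨min (l i.val) k, by omega⟩ : Fin (k+2)) else ⟨k + 1, by omega⟩) : Fin (k+2)).val ≤ k
          then Tetris^[((if i.val ∈ s then (⟨min (l i.val) k, by omega⟩ : Fin (k+2)) else ⟨k + 1, by omega⟩) : Fin (k+2)).val] (F i.val) else 0)
        = (if i.val ∈ s then Tetris^[l i.val] (F i.val) else 0) := by
      intro i
      by_cases hin : i.val ∈ s
      · simp only [if_pos hin, Fin.val_mk]
        rw [if_pos (min_le_right _ _)]
        exact tetris_iter_min (hF i.val (hlt _ hin)).1 (l i.val)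
      · simp only [if_neg hin, Fin.val_mk]
        rw [if_neg (by omega)]
    rw [Finset.sum_congr rfl (fun i _ => h1 i)]
    rw [Fin.sum_univ_eq_sum_range (fun i => if i ∈ s then Tetris^[l i] (F i) else 0) m]
    rw [Finset.sum_ite_mem, Finset.inter_eq_right.2 hss]
  exact Set.Finite.subset (Set.finite_range _) hsub

/-- **Finite `FIN_k` theorem.** For all `m`, `k ≥ 1`, `r ≥ 1` there is `n` such that every
`r`-coloring of `FIN_k(n)` admits a block sequence of length `m` in `FIN_k(n)` on whose
combinatorial space the coloring is constant. -/
theorem finite_FINk_theorem (m k r : ℕ) (hk : 1 ≤ k) (hr : 1 ≤ r) :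
    ∃ n : ℕ, ∀ c : (ℕ →₀ ℕ) → Fin r,
      ∃ F : ℕ → (ℕ →₀ ℕ),
        (∀ i < m, F i ∈ FINkN k n) ∧ IsBlockSeqFin m F ∧
        ∀ g ∈ CombSpace m F, ∀ h ∈ CombSpace m F, c g = c h := by
  by_contra hcon
  push_neg at hcon
  have hcs : ∀ n : ℕ, ∃ c : (ℕ →₀ ℕ) → Fin r, ∀ F : ℕ → (ℕ →₀ ℕ),
      (∀ i < m, F i ∈ FINkN k n) → IsBlockSeqFin m F →
      ∃ g ∈ CombSpace m F, ∃ h ∈ CombSpace m F, c g ≠ c h := by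
    intro n
    obtain ⟨c, hc⟩ := hcon n
    refine ⟨c, fun F h1 h2 => ?_⟩
    obtain ⟨g, hg, h', hh', hne⟩ := hc F h1 h2
    exact ⟨g, hg, h', hh', hne⟩
  choose cs hcs' using hcs
  haveI : Nonempty (Fin r) := ⟨⟨0, hr⟩⟩
  set 𝒰 : Ultrafilter ℕ := Filter.hyperfilter ℕ with h𝒰
  have hex : ∀ f : MM, ∃ v : Fin r, {n | cs n f = v} ∈ 𝒰 := by
    intro f
    have hcover : (Set.univ : Set ℕ) = ⋃ v ∈ (Set.univ : Set (Fin r)), {n | cs n f = v} := by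
      ext n
      simp
    have huniv : (Set.univ : Set ℕ) ∈ 𝒰 := univ_mem
    rw [hcover] at huniv
    obtain ⟨v, -, hv⟩ := (Ultrafilter.finite_biUnion_mem_iff Set.finite_univ).mp huniv
    exact ⟨v, hv⟩
  choose climit hclimit using hex
  obtain ⟨F, v, hFfin, hFblk, hFcol⟩ := percolor m k r hk climit
  set N : ℕ := (Finset.range m).sup (fun i => (F i).support.sup id) + 1 with hN
  have hsupp : ∀ i < m, ∀ x ∈ (F i).support, x < N := by
    intro i him x hx
    have h1 : x ≤ (F i).support.sup id := by simpa using Finset.le_sup (f := id) hx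
    have h2 : (F i).support.sup id ≤ (Finset.range m).sup (fun i => (F i).support.sup id) :=
      Finset.le_sup (f := fun i => (F i).support.sup id) (Finset.mem_range.mpr him)
    omega
  have hGfin : (CombSpace m F).Finite := combSpace_finite m k F hFfin
  have hagree : {n | ∀ g ∈ CombSpace m F, cs n g = climit g} ∈ 𝒰 := by
    have : (⋂ g ∈ CombSpace m F, {n | cs n g = climit g}) ∈ (𝒰 : Filter ℕ) := by
      rw [Filter.biInter_mem hGfin]
      intro g _
      exact hclimit g
    refine mem_of_superset this ?_
    intro n hn
    rw [Set.mem_iInter₂] at hn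
    exact hn
  have hbigN : {n : ℕ | N ≤ n} ∈ 𝒰 := by
    refine Filter.mem_hyperfilter_of_finite_compl ?_
    have h2 : {n : ℕ | N ≤ n}ᶜ = Set.Iio N := by ext n; simp [Set.mem_Iio]
    rw [h2]
    exact Set.finite_Iio N
  obtain ⟨n, hn1, hn2⟩ := Ultrafilter.nonempty_of_mem (inter_mem hagree hbigN)
  have hcontr := hcs' n F ?_ hFblk
  · obtain ⟨g, hg, h', hh', hne⟩ := hcontr
    have e1 : cs n g = climit g := hn1 g hg
    have e2 : cs n h' = climit h' := hn1 h' hh'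
    rw [e1, e2, hFcol g hg, hFcol h' hh'] at hne
    exact hne rfl
  · intro i him
    refine ⟨hFfin i him, fun x hx => ?_⟩
    have h4 : x < N := hsupp i him x hx
    have h5 : N ≤ n := hn2
    omega
end

section
/- For all natural numbers k ≥ 1, m, r ≥ 1 and d ≥ 1 there exists a natural number n such that for every coloring c : FIN_k(n)^{[d]} → {0,…,r−1} of the block sequences of length d in FIN_k(n) there exists a block sequence (f_i)_{i<m} of length m of elements of FIN_k(n) such that c is constant on the set of block sequences of length d contained in the combinatorial space ⟨f_i⟩_{i<m}. -/
namespace GowersAux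

abbrev D := ℕ →₀ ℕ
open Filter
attribute [local instance] Ultrafilter.add Ultrafilter.addSemigroup



theorem tetris_apply (f : D) (x : ℕ) : Tetris f x = f x - 1 := rfl

theorem tetris_iter_apply (l : ℕ) (f : D) (x : ℕ) : (Tetris^[l] f) x = f x - l := by
  induction l generalizing f with
  | zero => simp
  | succ n ih =>
    rw [Function.iterate_succ_apply, ih, tetris_apply]
    omega

theorem tetris_iter_eq_zero {k : ℕ} {f : D} (hf : ∀ n, f n ≤ k) {l : ℕ} (hl : k ≤ l) :
    Tetris^[l] f = 0 := by
  ext x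
  rw [tetris_iter_apply]
  have := hf x
  simp
  omega

theorem support_tetris_iter_subset (l : ℕ) (f : D) : (Tetris^[l] f).support ⊆ f.support := by
  intro x hx
  simp only [Finsupp.mem_support_iff, tetris_iter_apply] at hx ⊢
  omega

theorem disjoint_support_of_blk {f g : D} (h : Blk f g) : Disjoint f.support g.support := by
  rw [Finset.disjoint_left]
  intro a haf hag
  exact absurd (h a haf a hag) (lt_irrefl a)

theorem add_apply_left {f g : D} (h : Disjoint f.support g.support) {x : ℕ} (hx : x ∈ f.support) :
    (f + g) x = f x := by
  have : g x = 0 := by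
    by_contra hg
    exact (Finset.disjoint_left.mp h hx) (Finsupp.mem_support_iff.mpr hg)
  simp [this]

theorem tetris_add_of_disjoint {f g : D} (h : Disjoint f.support g.support) :
    Tetris (f + g) = Tetris f + Tetris g := by
  ext x
  simp only [tetris_apply, Finsupp.add_apply, tetris_apply]
  by_cases hf : x ∈ f.support
  · have : g x = 0 := by
      by_contra hg
      exact (Finset.disjoint_left.mp h hf) (Finsupp.mem_support_iff.mpr hg)
    simp [this]
  · have : f x = 0 := by simpa [Finsupp.mem_support_iff] using hf
    simp [this]

theorem tetris_iter_add_of_disjoint (l : ℕ) {f g : D} (h : Disjoint f.support g.support) :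
    Tetris^[l] (f + g) = Tetris^[l] f + Tetris^[l] g := by
  ext x
  simp only [tetris_iter_apply, Finsupp.add_apply]
  by_cases hf : x ∈ f.support
  · have : g x = 0 := by
      by_contra hg
      exact (Finset.disjoint_left.mp h hf) (Finsupp.mem_support_iff.mpr hg)
    simp [this]
  · have : f x = 0 := by simpa [Finsupp.mem_support_iff] using hf
    simp [this]

theorem blk_add_right {a f g : D} (h1 : Blk a f) (h2 : Blk a g) : Blk a (f + g) := by
  intro i hi j hj
  have := Finsupp.support_add hj
  rcases Finset.mem_union.mp this with hj' | hj'
  · exact h1 i hi j hj'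
  · exact h2 i hi j hj'

theorem blk_add_left {a f g : D} (h1 : Blk f a) (h2 : Blk g a) : Blk (f + g) a := by
  intro i hi j hj
  have := Finsupp.support_add hi
  rcases Finset.mem_union.mp this with hi' | hi'
  · exact h1 i hi' j hj
  · exact h2 i hi' j hj

theorem blk_zero_left (f : D) : Blk 0 f := by intro i hi; simp at hi

theorem blk_zero_right (f : D) : Blk f 0 := by intro i hi j hj; simp at hj

theorem blk_of_tail {f g : D} {N : ℕ} (hf : ∀ i ∈ f.support, i ≤ N)
    (hg : ∀ j ∈ g.support, N < j) : Blk f g := fun i hi j hj => lt_of_le_of_lt (hf i hi) (hg j hj)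

theorem blk_tetris_iter {f g : D} (h : Blk f g) (l l' : ℕ) : Blk (Tetris^[l] f) (Tetris^[l'] g) :=
  fun i hi j hj => h i (support_tetris_iter_subset l f hi) j (support_tetris_iter_subset l' g hj)





attribute [local instance] Ultrafilter.add Ultrafilter.addSemigroup

open Filter

/-- tail measures -/
def TailSet (N : ℕ) : Set D := {f | ∀ i ∈ f.support, N < i}

def TailU (U : Ultrafilter D) : Prop := ∀ N, ∀ᶠ f in U, f ∈ TailSet N

def LSet (j : ℕ) : Set D := {f | IsFINk j f}

def GoodU (j : ℕ) (U : Ultrafilter D) : Prop := (∀ᶠ f in U, f ∈ LSet j) ∧ TailU U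

theorem ev_blk {U : Ultrafilter D} (hU : TailU U) (g : D) : ∀ᶠ f in U, Blk g f := by
  filter_upwards [hU (g.support.sup id)] with f hf
  exact blk_of_tail (fun i hi => Finset.le_sup (f := id) hi) hf

theorem isFINk_add {j j' : ℕ} {f g : D} (hb : Blk f g) (hf : IsFINk j f) (hg : IsFINk j' g) :
    IsFINk (max j j') (f + g) := by
  have hd := disjoint_support_of_blk hb
  constructor
  · intro n
    by_cases hn : n ∈ f.support
    · have : g n = 0 := by
        by_contra hgn
        exact (Finset.disjoint_left.mp hd hn) (Finsupp.mem_support_iff.mpr hgn)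
      simp only [Finsupp.add_apply, this, add_zero]
      exact le_trans (hf.1 n) (le_max_left _ _)
    · have : f n = 0 := by simpa [Finsupp.mem_support_iff] using hn
      simp only [Finsupp.add_apply, this, zero_add]
      exact le_trans (hg.1 n) (le_max_right _ _)
  · rcases le_total j j' with h | h
    · rw [max_eq_right h]
      obtain ⟨n, hn⟩ := hg.2
      rcases Nat.eq_zero_or_pos j' with h0 | hpos
      · exact ⟨n, by have := hf.1 n; have := hg.1 n; simp only [Finsupp.add_apply]; omega⟩
      · have hns : n ∈ g.support := Finsupp.mem_support_iff.mpr (by omega)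
        have : f n = 0 := by
          by_contra hfn
          exact (Finset.disjoint_right.mp hd hns) (Finsupp.mem_support_iff.mpr hfn)
        exact ⟨n, by simp [Finsupp.add_apply, this, hn]⟩
    · rw [max_eq_left h]
      obtain ⟨n, hn⟩ := hf.2
      rcases Nat.eq_zero_or_pos j with h0 | hpos
      · exact ⟨n, by have := hf.1 n; have := hg.1 n; simp only [Finsupp.add_apply]; omega⟩
      · have hns : n ∈ f.support := Finsupp.mem_support_iff.mpr (by omega)
        have : g n = 0 := by
          by_contra hgn
          exact (Finset.disjoint_left.mp hd hns) (Finsupp.mem_support_iff.mpr hgn)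
        exact ⟨n, by simp [Finsupp.add_apply, this, hn]⟩

theorem tailU_add {U V : Ultrafilter D} (hU : TailU U) (hV : TailU V) : TailU (U + V) := by
  intro N
  rw [Ultrafilter.eventually_add]
  filter_upwards [hU N] with f hf
  filter_upwards [hV N] with g hg
  intro i hi
  rcases Finset.mem_union.mp (Finsupp.support_add hi) with h | h
  · exact hf i h
  · exact hg i h

theorem goodU_add {j j' : ℕ} {U V : Ultrafilter D} (hU : GoodU j U) (hV : GoodU j' V) :
    GoodU (max j j') (U + V) := by
  refine ⟨?_, tailU_add hU.2 hV.2⟩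
  rw [Ultrafilter.eventually_add]
  filter_upwards [hU.1] with f hf
  filter_upwards [hV.1, ev_blk hV.2 f] with g hg hb
  exact isFINk_add hb hf hg

theorem pure_zero_add (V : Ultrafilter D) : (pure 0 : Ultrafilter D) + V = V := by
  apply Ultrafilter.coe_inj.mp
  apply Filter.ext'
  intro p
  rw [Ultrafilter.eventually_add]
  simp

theorem add_pure_zero (V : Ultrafilter D) : V + (pure 0 : Ultrafilter D) = V := by
  apply Ultrafilter.coe_inj.mp
  apply Filter.ext'
  intro p
  rw [Ultrafilter.eventually_add]
  simp

theorem goodU_pure_zero : GoodU 0 (pure 0) := by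
  constructor
  · refine Filter.eventually_pure.mpr ⟨fun n => by simp, ⟨0, by simp⟩⟩
  · intro N
    refine Filter.eventually_pure.mpr ?_
    intro i hi
    simp at hi

theorem map_tetris_add {U V : Ultrafilter D} (hV : TailU V) :
    (U + V).map Tetris = U.map Tetris + V.map Tetris := by
  apply Ultrafilter.coe_inj.mp
  apply Filter.ext'
  intro p
  simp only [Ultrafilter.eventually_add, Ultrafilter.coe_map, Filter.eventually_map]
  constructor
  · intro h
    filter_upwards [h] with f hf
    filter_upwards [hf, ev_blk hV f] with g hg hb
    rwa [← tetris_add_of_disjoint (disjoint_support_of_blk hb)]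
  · intro h
    filter_upwards [h] with f hf
    filter_upwards [hf, ev_blk hV f] with g hg hb
    rwa [tetris_add_of_disjoint (disjoint_support_of_blk hb)]

/-- Generic FIP ultrafilter existence. -/
theorem exists_ultrafilter_of_directed {ι : Type} [Nonempty ι] (S : ι → Set D)
    (dir : ∀ i i', ∃ i'', S i'' ⊆ S i ∧ S i'' ⊆ S i') (ne : ∀ i, (S i).Nonempty) :
    ∃ U : Ultrafilter D, ∀ i, S i ∈ U := by
  have hd : Directed (· ≥ ·) (fun i => (𝓟 (S i) : Filter D)) := by
    intro i i'
    obtain ⟨i'', h1, h2⟩ := dir i i'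
    exact ⟨i'', Filter.principal_mono.mpr h1, Filter.principal_mono.mpr h2⟩
  have : (⨅ i, (𝓟 (S i) : Filter D)).NeBot := by
    apply Filter.iInf_neBot_of_directed' hd
    intro i
    exact Filter.principal_neBot_iff.mpr (ne i)
  obtain ⟨U, hU⟩ := Filter.exists_ultrafilter_le (⨅ i, (𝓟 (S i) : Filter D))
  refine ⟨U, fun i => ?_⟩
  have : (U : Filter D) ≤ 𝓟 (S i) := le_trans hU (iInf_le _ i)
  exact Filter.le_principal_iff.mp this

theorem isClosed_mem_sets (A : Set D) : IsClosed {U : Ultrafilter D | A ∈ U} :=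
  ultrafilter_isClosed_basic A

theorem isClosed_tailU : IsClosed {U : Ultrafilter D | TailU U} := by
  have : {U : Ultrafilter D | TailU U} = ⋂ N, {U : Ultrafilter D | TailSet N ∈ U} := by
    ext U
    simp only [Set.mem_iInter, Set.mem_setOf_eq]
    rfl
  rw [this]
  exact isClosed_iInter fun N => isClosed_mem_sets _

theorem isClosed_goodU (j : ℕ) : IsClosed {U : Ultrafilter D | GoodU j U} := by
  have : {U : Ultrafilter D | GoodU j U}
      = {U : Ultrafilter D | LSet j ∈ U} ∩ {U : Ultrafilter D | TailU U} := by
    ext U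
    simp only [Set.mem_inter_iff, Set.mem_setOf_eq]
    rfl
  rw [this]
  exact (isClosed_mem_sets _).inter isClosed_tailU

theorem map_eq_iff {V : Ultrafilter D} {W : Ultrafilter D} (φ : D → D) :
    V.map φ = W ↔ ∀ A ∈ W, φ ⁻¹' A ∈ V := by
  constructor
  · intro h A hA
    rw [← h] at hA
    exact hA
  · intro h
    apply Ultrafilter.coe_le_coe.mp
    intro A hA
    exact h A hA

theorem isClosed_map_eq (W : Ultrafilter D) (φ : D → D) :
    IsClosed {V : Ultrafilter D | V.map φ = W} := by
  have : {V : Ultrafilter D | V.map φ = W} = ⋂ A ∈ {A | A ∈ W}, {V : Ultrafilter D | φ ⁻¹' A ∈ V} := by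
    ext V
    simp only [Set.mem_iInter, Set.mem_setOf_eq]
    exact map_eq_iff φ
  rw [this]
  exact isClosed_biInter fun A _ => isClosed_mem_sets _

theorem isClosed_add_right_eq (W : Ultrafilter D) :
    IsClosed {V : Ultrafilter D | V + W = V} :=
  isClosed_eq (Ultrafilter.continuous_add_left W) continuous_id

/-- Existence of an idempotent in a nonempty closed subsemigroup of βD. -/
theorem exists_idem (s : Set (Ultrafilter D)) (hne : s.Nonempty) (hcl : IsClosed s)
    (hadd : ∀ U ∈ s, ∀ V ∈ s, U + V ∈ s) : ∃ U ∈ s, U + U = U :=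
  exists_idempotent_in_compact_add_subsemigroup Ultrafilter.continuous_add_left s hne
    hcl.isCompact hadd

noncomputable def lift (g : D) (N : ℕ) : D :=
  if g = 0 then Finsupp.single (N + 1) 1 else g + ∑ i ∈ g.support, Finsupp.single i 1

theorem sum_single_apply (s : Finset ℕ) (x : ℕ) :
    (∑ i ∈ s, Finsupp.single i (1 : ℕ)) x = if x ∈ s then 1 else 0 := by
  rw [Finsupp.finset_sum_apply]
  by_cases hx : x ∈ s
  · rw [Finset.sum_eq_single x]
    · simp [hx]
    · intro b _ hb
      simp [Finsupp.single_apply, hb]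
    · intro h
      exact absurd hx h
  · simp only [hx, if_false]
    apply Finset.sum_eq_zero
    intro b hb
    have : b ≠ x := fun h => hx (h ▸ hb)
    simp [Finsupp.single_apply, this]

theorem lift_apply {g : D} (hg : g ≠ 0) (N x : ℕ) :
    lift g N x = g x + (if x ∈ g.support then 1 else 0) := by
  rw [lift, if_neg hg, Finsupp.add_apply, sum_single_apply]

theorem tetris_lift {K : ℕ} {g : D} (hg : IsFINk K g) (N : ℕ) : Tetris (lift g N) = g := by
  by_cases h : g = 0
  · subst h
    ext x
    rw [tetris_apply, lift, if_pos rfl]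
    simp only [Finsupp.single_apply, Finsupp.coe_zero, Pi.zero_apply]
    split <;> rfl
  · ext x
    rw [tetris_apply, lift_apply h]
    by_cases hx : x ∈ g.support
    · have : g x ≠ 0 := Finsupp.mem_support_iff.mp hx
      simp [hx]
    · have : g x = 0 := by simpa [Finsupp.mem_support_iff] using hx
      simp [hx, this]

theorem isFINk_lift {K : ℕ} {g : D} (hg : IsFINk K g) (N : ℕ) : IsFINk (K + 1) (lift g N) := by
  by_cases h : g = 0
  · obtain ⟨n, hn⟩ := hg.2
    have hK : K = 0 := by rw [h] at hn; simpa using hn.symm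
    subst hK
    rw [lift, if_pos h]
    constructor
    · intro n
      simp only [Finsupp.single_apply]
      split <;> omega
    · exact ⟨N + 1, by simp⟩
  · have hK : 1 ≤ K := by
      by_contra hK
      push_neg at hK
      interval_cases K
      apply h
      ext x
      have := hg.1 x
      simp only [Finsupp.coe_zero, Pi.zero_apply]
      omega
    constructor
    · intro x
      rw [lift_apply h]
      have := hg.1 x
      split <;> omega
    · obtain ⟨n, hn⟩ := hg.2
      have hns : n ∈ g.support := Finsupp.mem_support_iff.mpr (by omega)
      exact ⟨n, by rw [lift_apply h, if_pos hns, hn]⟩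

theorem tail_lift {g : D} {N : ℕ} (hg : g ∈ TailSet N) : lift g N ∈ TailSet N := by
  by_cases h : g = 0
  · rw [lift, if_pos h]
    intro i hi
    have := Finsupp.support_single_subset hi
    simp at this
    omega
  · intro i hi
    apply hg
    by_contra hns
    have h0 : g i = 0 := by simpa [Finsupp.mem_support_iff] using hns
    have := Finsupp.mem_support_iff.mp hi
    rw [lift_apply h, h0] at this
    simp [hns] at this

/-- The chain of cohesive idempotent ultrafilters `U_1, …, U_k`. -/
theorem exists_chain (k : ℕ) : ∃ UU : ℕ → Ultrafilter D,
    UU 0 = pure 0 ∧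
    (∀ j, j ≤ k → GoodU j (UU j)) ∧
    (∀ j, 1 ≤ j → j ≤ k → (UU j).map Tetris = UU (j - 1)) ∧
    (∀ i j, i ≤ j → j ≤ k → UU i + UU j = UU j ∧ UU j + UU i = UU j) := by
  induction k with
  | zero =>
    refine ⟨fun _ => pure 0, rfl, fun j hj => ?_, fun j hj1 hj0 => by omega, fun i j hij hj => ?_⟩
    · interval_cases j
      exact goodU_pure_zero
    · interval_cases j
      interval_cases i
      exact ⟨pure_zero_add _, add_pure_zero _⟩
  | succ K ih =>
    obtain ⟨UU, hzero, hgood, hmap, hrel⟩ := ih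
    have tetris_zero : Tetris (0 : D) = 0 := by
      ext x
      rw [tetris_apply]
      simp
    have hmapK : UU K + (UU K).map Tetris = UU K ∧ ((UU K).map Tetris) + UU K = UU K := by
      rcases Nat.eq_zero_or_pos K with h0 | hpos
      · subst h0
        rw [hzero, Ultrafilter.map_pure, tetris_zero]
        exact ⟨add_pure_zero _, pure_zero_add _⟩
      · rw [hmap K hpos le_rfl]
        exact ⟨(hrel (K - 1) K (by omega) le_rfl).2, (hrel (K - 1) K (by omega) le_rfl).1⟩
    -- the closed subsemigroup X
    set X : Set (Ultrafilter D) :=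
      {V | GoodU (K + 1) V ∧ V.map Tetris = UU K} with hX
    have hXne : X.Nonempty := by
      haveI : Nonempty ({A : Set D // A ∈ UU K} × ℕ) :=
        ⟨⟨⟨Set.univ, Filter.univ_mem⟩, 0⟩⟩
      obtain ⟨V₀, hV₀⟩ := exists_ultrafilter_of_directed
        (ι := {A : Set D // A ∈ UU K} × ℕ)
        (fun p => Tetris ⁻¹' p.1.1 ∩ LSet (K + 1) ∩ TailSet p.2)
        (fun p q => by
          refine ⟨⟨⟨p.1.1 ∩ q.1.1, (UU K).toFilter.inter_sets p.1.2 q.1.2⟩, max p.2 q.2⟩, ?_, ?_⟩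
          · intro x hx
            refine ⟨⟨hx.1.1.1, hx.1.2⟩, fun i hi => ?_⟩
            exact lt_of_le_of_lt (le_max_left _ _) (hx.2 i hi)
          · intro x hx
            refine ⟨⟨hx.1.1.2, hx.1.2⟩, fun i hi => ?_⟩
            exact lt_of_le_of_lt (le_max_right _ _) (hx.2 i hi))
        (fun p => by
          have hmem : p.1.1 ∩ LSet K ∩ TailSet p.2 ∈ UU K := by
            refine (UU K).toFilter.inter_sets ((UU K).toFilter.inter_sets p.1.2 ?_) ?_
            · exact ((hgood K le_rfl).1 : _)
            · exact ((hgood K le_rfl).2 p.2 : _)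
          obtain ⟨g, hg⟩ := Ultrafilter.nonempty_of_mem hmem
          refine ⟨lift g p.2, ?_, ?_⟩
          · exact ⟨by
              simp only [Set.mem_preimage]
              rw [tetris_lift hg.1.2 p.2]
              exact hg.1.1, isFINk_lift hg.1.2 p.2⟩
          · exact tail_lift hg.2)
      refine ⟨V₀, ⟨⟨?_, ?_⟩, ?_⟩⟩
      · have := hV₀ ⟨⟨Set.univ, Filter.univ_mem⟩, 0⟩
        exact Filter.mem_of_superset this (fun x hx => hx.1.2)
      · intro N
        have := hV₀ ⟨⟨Set.univ, Filter.univ_mem⟩, N⟩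
        exact Filter.mem_of_superset this (fun x hx => hx.2)
      · rw [map_eq_iff]
        intro A hA
        have := hV₀ ⟨⟨A, hA⟩, 0⟩
        exact Filter.mem_of_superset this (fun x hx => hx.1.1)
    have hXcl : IsClosed X := by
      have : X = {V : Ultrafilter D | GoodU (K + 1) V} ∩ {V | V.map Tetris = UU K} := rfl
      rw [this]
      exact (isClosed_goodU _).inter (isClosed_map_eq _ _)
    have hXadd : ∀ U ∈ X, ∀ V ∈ X, U + V ∈ X := by
      intro U hU V hV
      refine ⟨?_, ?_⟩
      · have := goodU_add hU.1 hV.1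
        rwa [max_self] at this
      · rw [map_tetris_add hV.1.2, hU.2, hV.2]
        exact (hrel K K le_rfl le_rfl).1
    obtain ⟨W, hWX, hWidem⟩ := exists_idem X hXne hXcl hXadd
    -- the closed subsemigroup Y
    set Y : Set (Ultrafilter D) := X ∩ {V | V + UU K = V} with hY
    have hYne : Y.Nonempty := by
      refine ⟨W + UU K, ⟨?_, ?_⟩, ?_⟩
      · have := goodU_add hWX.1 (hgood K le_rfl)
        rwa [max_eq_left (by omega)] at this
      · rw [map_tetris_add (hgood K le_rfl).2, hWX.2]
        exact hmapK.1
      · show W + UU K + UU K = W + UU K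
        rw [add_assoc, (hrel K K le_rfl le_rfl).1]
    have hYcl : IsClosed Y := hXcl.inter (isClosed_add_right_eq _)
    have hYadd : ∀ U ∈ Y, ∀ V ∈ Y, U + V ∈ Y := by
      intro U hU V hV
      refine ⟨hXadd U hU.1 V hV.1, ?_⟩
      show U + V + UU K = U + V
      rw [add_assoc, hV.2]
    obtain ⟨W', hW'Y, hW'idem⟩ := exists_idem Y hYne hYcl hYadd
    have hW'X : W' ∈ X := hW'Y.1
    have hW'r : W' + UU K = W' := hW'Y.2
    -- the new chain
    have hW'map : W'.map Tetris = UU K := hW'X.2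
    have hW'good : GoodU (K + 1) W' := hW'X.1
    refine ⟨fun j => if j = K + 1 then UU K + W' else UU j, ?_, ?_, ?_, ?_⟩
    · simp only [Nat.zero_ne_add_one, if_neg, reduceIte]
      exact hzero
    · intro j hj
      by_cases h : j = K + 1
      · subst h
        simp only [reduceIte]
        have := goodU_add (hgood K le_rfl) hW'good
        rwa [max_eq_right (by omega)] at this
      · have hjK : j ≤ K := by omega
        simpa only [if_neg h] using hgood j hjK
    · intro j hj1 hj
      by_cases h : j = K + 1
      · subst h
        have h1 : K + 1 - 1 = K := rfl
        simp only [reduceIte, h1, if_neg (by omega : ¬ K = K + 1)]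
        rw [map_tetris_add hW'good.2, hW'map]
        exact hmapK.2
      · have hjK : j ≤ K := by omega
        have hj1K : ¬ (j - 1 = K + 1) := by omega
        simp only [if_neg h, if_neg hj1K]
        exact hmap j hj1 hjK
    · intro i j hij hj
      by_cases h : j = K + 1
      · subst h
        by_cases hi : i = K + 1
        · subst hi
          simp only [reduceIte]
          constructor <;>
          · show UU K + W' + (UU K + W') = UU K + W'
            rw [add_assoc, ← add_assoc W', hW'r, hW'idem]
        · have hiK : i ≤ K := by omega
          simp only [if_neg hi, reduceIte]
          constructor
          · show UU i + (UU K + W') = UU K + W'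
            rw [← add_assoc, (hrel i K hiK le_rfl).1]
          · show UU K + W' + UU i = UU K + W'
            have : W' + UU i = W' := by
              nth_rewrite 1 [← hW'r]
              rw [add_assoc, (hrel i K hiK le_rfl).2, hW'r]
            rw [add_assoc, this]
      · have hjK : j ≤ K := by omega
        have hiK : ¬ (i = K + 1) := by omega
        simp only [if_neg h, if_neg hiK]
        exact hrel i j hij hjK




open Filter

/-- The color that an ultrafilter assigns to a finite coloring. -/
theorem exists_ucolor {α : Type} {r : ℕ} (hr : 1 ≤ r) (U : Ultrafilter α) (φ : α → Fin r) :
    ∃ ε : Fin r, ∀ᶠ a in U, φ a = ε := by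
  by_contra h
  push_neg at h
  have h' : ∀ ε : Fin r, ∀ᶠ a in U, φ a ≠ ε := by
    intro ε
    exact h ε
  have : ∀ᶠ a in (U : Filter α), ∀ ε : Fin r, φ a ≠ ε := Filter.eventually_all.mpr h'
  obtain ⟨a, ha⟩ := this.exists
  exact ha (φ a) rfl

noncomputable def uColor {α : Type} {r : ℕ} (hr : 1 ≤ r) (U : Ultrafilter α) (φ : α → Fin r) :
    Fin r :=
  Classical.choose (exists_ucolor hr U φ)

theorem uColor_spec {α : Type} {r : ℕ} (hr : 1 ≤ r) (U : Ultrafilter α) (φ : α → Fin r) :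
    ∀ᶠ a in U, φ a = uColor hr U φ :=
  Classical.choose_spec (exists_ucolor hr U φ)

theorem uColor_eq {α : Type} {r : ℕ} (hr : 1 ≤ r) (U : Ultrafilter α) (φ : α → Fin r)
    {ε : Fin r} (h : ∀ᶠ a in U, φ a = ε) : uColor hr U φ = ε := by
  obtain ⟨a, ha1, ha2⟩ := ((uColor_spec hr U φ).and h).exists
  rw [← ha1, ha2]

theorem uColor_congr {α : Type} {r : ℕ} (hr : 1 ≤ r) (U : Ultrafilter α) {φ ψ : α → Fin r}
    (h : ∀ a, φ a = ψ a) : uColor hr U φ = uColor hr U ψ := by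
  have : φ = ψ := funext h
  rw [this]

variable {r d : ℕ}

/-- The iterated ultrafilter color of a partial tuple: `gamF hr U c s G` is the `γ`-color
of the partial tuple given by the first `d - s` values of `G`. -/
noncomputable def gamF (hr : 1 ≤ r) (U : Ultrafilter D) (c : (Fin d → D) → Fin r) :
    ℕ → (ℕ → D) → Fin r
  | 0, G => c (fun i => G i)
  | (s+1), G => uColor hr U (fun h => gamF hr U c s (Function.update G (d - (s+1)) h))

theorem gamF_congr (hr : 1 ≤ r) (U : Ultrafilter D) (c : (Fin d → D) → Fin r) (s : ℕ)
    {G G' : ℕ → D} (h : ∀ i, i < d - s → G i = G' i) :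
    gamF hr U c s G = gamF hr U c s G' := by
  induction s generalizing G G' with
  | zero =>
    show c _ = c _
    congr 1
    funext i
    exact h i (by omega)
  | succ s ih =>
    show uColor _ _ _ = uColor _ _ _
    apply uColor_congr
    intro a
    apply ih
    intro i hi
    by_cases hit : i = d - (s+1)
    · subst hit
      simp [Function.update_self]
    · rw [Function.update_of_ne hit, Function.update_of_ne hit]
      exact h i (by omega)

theorem gamF_succ (hr : 1 ≤ r) (U : Ultrafilter D) (c : (Fin d → D) → Fin r) {t : ℕ}
    (ht : t < d) (G : ℕ → D) :
    gamF hr U c (d - t) G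
      = uColor hr U (fun h => gamF hr U c (d - (t+1)) (Function.update G t h)) := by
  have h1 : d - t = (d - (t+1)) + 1 := by omega
  rw [h1]
  show uColor _ _ _ = uColor _ _ _
  apply uColor_congr
  intro a
  have h2 : d - ((d - (t+1)) + 1) = t := by omega
  rw [h2]



open Filter
attribute [local instance] Ultrafilter.add Ultrafilter.addSemigroup


def Chain (k : ℕ) (UU : ℕ → Ultrafilter D) : Prop :=
  UU 0 = pure 0 ∧ (∀ j ≤ k, GoodU j (UU j)) ∧
  (∀ j, 1 ≤ j → j ≤ k → (UU j).map Tetris = UU (j - 1)) ∧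
  (∀ i j, i ≤ j → j ≤ k → UU i + UU j = UU j ∧ UU j + UU i = UU j)

theorem chain_map_iter {k : ℕ} {UU : ℕ → Ultrafilter D} (hch : Chain k UU) :
    ∀ l j, l ≤ j → j ≤ k → (UU j).map (Tetris^[l]) = UU (j - l) := by
  intro l
  induction l with
  | zero =>
    intro j _ _
    simpa using Ultrafilter.map_id (UU j)
  | succ l ih =>
    intro j hl hj
    rw [Function.iterate_succ]
    have : (UU j).map (Tetris^[l] ∘ Tetris) = ((UU j).map Tetris).map (Tetris^[l]) :=
      (Ultrafilter.map_map _ _ _).symm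
    rw [this, hch.2.2.1 j (by omega) hj, ih (j - 1) (by omega) (by omega)]
    congr 1
    omega

/-- A partially specified combinatorial sum. -/
noncomputable def psum (F : ℕ → D) (n : ℕ) (l : ℕ → ℕ) : D :=
  ∑ u ∈ Finset.range n, Tetris^[l u] (F u)

noncomputable def rowF (F : ℕ → D) (n : ℕ) (L : ℕ → ℕ → ℕ) : ℕ → D :=
  fun i => psum F n (L i)

/-- A valid tuple parametrization: complete rows, separated used indices. -/
def OKTup (k n t : ℕ) (L : ℕ → ℕ → ℕ) : Prop :=
  (∀ i < t, ∃ u < n, L i u = 0) ∧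
  (∀ i i' u v, i < i' → i' < t → u < n → v < n → L i u < k → L i' v < k → u < v)

/-- A valid configuration: `t` complete rows plus a partial row `t`. -/
def OKCfg (k n t : ℕ) (L : ℕ → ℕ → ℕ) : Prop :=
  (∀ i < t, ∃ u < n, L i u = 0) ∧
  (∀ i i' u v, i < i' → i' ≤ t → u < n → v < n → L i u < k → L i' v < k → u < v)

theorem psum_congr_F {F F' : ℕ → D} {n : ℕ} (h : ∀ u < n, F u = F' u) (l : ℕ → ℕ) :
    psum F n l = psum F' n l := by
  apply Finset.sum_congr rfl
  intro u hu
  rw [h u (Finset.mem_range.mp hu)]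

theorem psum_congr_l {F : ℕ → D} {n : ℕ} {l l' : ℕ → ℕ} (h : ∀ u < n, l u = l' u) :
    psum F n l = psum F n l' := by
  apply Finset.sum_congr rfl
  intro u hu
  rw [h u (Finset.mem_range.mp hu)]

theorem psum_succ (F : ℕ → D) (n : ℕ) (l : ℕ → ℕ) :
    psum F (n + 1) l = psum F n l + Tetris^[l n] (F n) :=
  Finset.sum_range_succ _ _

theorem tetris_trunc {k : ℕ} {f : D} (hf : ∀ x, f x ≤ k) (l : ℕ) :
    Tetris^[min l k] f = Tetris^[l] f := by
  rcases le_total l k with h | h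
  · rw [min_eq_left h]
  · rw [min_eq_right h, tetris_iter_eq_zero hf le_rfl, tetris_iter_eq_zero hf h]

theorem psum_trunc {k : ℕ} {F : ℕ → D} {n : ℕ} (hF : ∀ u < n, IsFINk k (F u)) (l : ℕ → ℕ) :
    psum F n (fun u => min (l u) k) = psum F n l := by
  apply Finset.sum_congr rfl
  intro u hu
  exact tetris_trunc (hF u (Finset.mem_range.mp hu)).1 (l u)

theorem psum_unused {k : ℕ} {F : ℕ → D} {n : ℕ} (hF : ∀ u < n, IsFINk k (F u)) {l : ℕ → ℕ}
    (h : ∀ u < n, k ≤ l u) : psum F n l = 0 := by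
  apply Finset.sum_eq_zero
  intro u hu
  exact tetris_iter_eq_zero (hF u (Finset.mem_range.mp hu)).1 (h u (Finset.mem_range.mp hu))


/-! ### The invariant for the inductive construction -/

noncomputable def eps0 {r d : ℕ} (hr : 1 ≤ r) (U : Ultrafilter D) (c : (Fin d → D) → Fin r) :
    Fin r :=
  gamF hr U c d (fun _ => 0)

def Inv (k : ℕ) {r d : ℕ} (hr : 1 ≤ r) (UU : ℕ → Ultrafilter D) (c : (Fin d → D) → Fin r)
    (F : ℕ → D) (n : ℕ) : Prop :=
  (∀ i < n, IsFINk k (F i)) ∧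
  (∀ i j, i < j → j < n → Blk (F i) (F j)) ∧
  (∀ t L, t ≤ d → OKTup k n t L →
    gamF hr (UU k) c (d - t) (rowF F n L) = eps0 hr (UU k) c) ∧
  (∀ t L j, t < d → OKCfg k n t L → 1 ≤ j → j ≤ k →
      ((∃ u < n, L t u = 0) ∨ j = k) →
      ∀ᶠ e in UU j,
        gamF hr (UU k) c (d - (t + 1))
          (Function.update (rowF F n L) t (psum F n (L t) + e)) = eps0 hr (UU k) c)

theorem gamF_top {r d : ℕ} (hr : 1 ≤ r) (U : Ultrafilter D) (c : (Fin d → D) → Fin r)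
    (G : ℕ → D) : gamF hr U c d G = eps0 hr U c :=
  gamF_congr hr U c d (fun i hi => by omega)

theorem inv_zero {k r d : ℕ} (hd : 1 ≤ d) (hr : 1 ≤ r) (UU : ℕ → Ultrafilter D)
    (c : (Fin d → D) → Fin r) (F : ℕ → D) : Inv k hr UU c F 0 := by
  refine ⟨by omega, by omega, ?_, ?_⟩
  · intro t L ht hok
    rcases Nat.eq_zero_or_pos t with h0 | hpos
    · subst h0
      rw [Nat.sub_zero]
      exact gamF_top hr (UU k) c _
    · obtain ⟨u, hu, _⟩ := hok.1 0 hpos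
      omega
  · intro t L j ht hok hj1 hjk hleg
    rcases Nat.eq_zero_or_pos t with h0 | hpos
    · subst h0
      have hjeq : j = k := by
        rcases hleg with ⟨u, hu, _⟩ | h
        · omega
        · exact h
      rw [hjeq]
      have h0sum : psum F 0 (L 0) = 0 := by simp [psum]
      have hsucc := gamF_succ hr (UU k) c (t := 0) hd (fun _ => 0)
      rw [Nat.sub_zero] at hsucc
      have hspec := uColor_spec hr (UU k)
        (fun h => gamF hr (UU k) c (d - 1) (Function.update (fun _ => 0) 0 h))
      filter_upwards [hspec] with e he
      have : gamF hr (UU k) c (d - (0 + 1))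
          (Function.update (rowF F 0 L) 0 (psum F 0 (L 0) + e))
          = gamF hr (UU k) c (d - 1) (Function.update (fun _ => 0) 0 e) := by
        apply gamF_congr
        intro i hi
        have : i = 0 := by omega
        subst this
        simp [h0sum]
      rw [this, he, ← hsucc, eps0]
    · obtain ⟨u, hu, _⟩ := hok.1 0 hpos
      omega

section Large

variable {k r d : ℕ} {hr : 1 ≤ r} {UU : ℕ → Ultrafilter D} {c : (Fin d → D) → Fin r}
  {F : ℕ → D} {n : ℕ}

theorem R2_large (hch : Chain k UU) (hinv : Inv k hr UU c F n) {t l : ℕ} (L : ℕ → ℕ → ℕ)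
    (ht : t < d) (hl : l < k) (hcfg : OKCfg k n t L)
    (hflag : l = 0 ∨ ∃ u < n, L t u = 0) :
    ∀ᶠ h in UU k,
      gamF hr (UU k) c (d - (t + 1))
        (Function.update (rowF F n L) t (psum F n (L t) + Tetris^[l] h))
          = eps0 hr (UU k) c := by
  have hev := hinv.2.2.2 t L (k - l) ht hcfg (by omega) (by omega)
    (by rcases hflag with h0 | hfl
        · right; omega
        · left; exact hfl)
  have hmap := chain_map_iter hch l k (by omega) le_rfl
  rw [← hmap] at hev
  rw [Ultrafilter.coe_map, Filter.eventually_map] at hev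
  exact hev

theorem R3_large (hch : Chain k UU) (hinv : Inv k hr UU c F n) {t l j : ℕ} (L : ℕ → ℕ → ℕ)
    (ht : t < d) (hl : l < k) (hj1 : 1 ≤ j) (hjk : j ≤ k) (hcfg : OKCfg k n t L)
    (hleg : (∃ u < n, L t u = 0) ∨ l = 0 ∨ j = k) :
    ∀ᶠ h in UU k, ∀ᶠ e in UU j,
      gamF hr (UU k) c (d - (t + 1))
        (Function.update (rowF F n L) t (psum F n (L t) + Tetris^[l] h + e))
          = eps0 hr (UU k) c := by
  set j'' := max (k - l) j with hj''
  have hleg'' : (∃ u < n, L t u = 0) ∨ j'' = k := by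
    rcases hleg with hfl | h0 | hk
    · left; exact hfl
    · right; omega
    · right; omega
  have hev := hinv.2.2.2 t L j'' ht hcfg (by omega) (by omega) hleg''
  have hsum : UU (k - l) + UU j = UU j'' := by
    rcases le_total (k - l) j with hle | hle
    · rw [hj'', max_eq_right hle]
      exact (hch.2.2.2 (k - l) j hle hjk).1
    · rw [hj'', max_eq_left hle]
      exact (hch.2.2.2 j (k - l) hle (by omega)).2
  rw [← hsum] at hev
  rw [Ultrafilter.eventually_add] at hev
  have hmap := chain_map_iter hch l k (by omega) le_rfl
  rw [← hmap] at hev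
  rw [Ultrafilter.coe_map, Filter.eventually_map] at hev
  filter_upwards [hev] with h hh
  filter_upwards [hh] with e he
  rwa [← add_assoc] at he

end Large

/-! ### Truncated parametrizations -/

def LOf {k n d : ℕ} (M : Fin (d + 1) → Fin n → Fin (k + 1)) : ℕ → ℕ → ℕ :=
  fun i u => if hi : i < d + 1 then if hu : u < n then (M ⟨i, hi⟩ ⟨u, hu⟩ : ℕ) else k else k

def truncM (k : ℕ) {n d : ℕ} (L : ℕ → ℕ → ℕ) : Fin (d + 1) → Fin n → Fin (k + 1) :=
  fun i u => ⟨min (L (i : ℕ) (u : ℕ)) k, by omega⟩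

theorem LOf_truncM {k n d : ℕ} (L : ℕ → ℕ → ℕ) {i u : ℕ} (hi : i < d + 1) (hu : u < n) :
    LOf (truncM k (n := n) (d := d) L) i u = min (L i u) k := by
  simp [LOf, truncM, hi, hu]

theorem OKCfg_trunc {k n d t : ℕ} (hk : 1 ≤ k) (ht : t ≤ d) {L : ℕ → ℕ → ℕ}
    (h : OKCfg k n t L) : OKCfg k n t (LOf (truncM k (n := n) (d := d) L)) := by
  constructor
  · intro i hi
    obtain ⟨u, hu, hu0⟩ := h.1 i hi
    refine ⟨u, hu, ?_⟩
    rw [LOf_truncM L (by omega) hu, hu0]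
    omega
  · intro i i' u v hii' hi't hu hv hiu hi'v
    rw [LOf_truncM L (by omega) hu] at hiu
    rw [LOf_truncM L (by omega) hv] at hi'v
    exact h.2 i i' u v hii' hi't hu hv (by omega) (by omega)

theorem flag_trunc {k n d t : ℕ} (hk : 1 ≤ k) (ht : t ≤ d) (L : ℕ → ℕ → ℕ) :
    (∃ u < n, LOf (truncM k (n := n) (d := d) L) t u = 0) ↔ (∃ u < n, L t u = 0) := by
  constructor
  · rintro ⟨u, hu, h0⟩
    rw [LOf_truncM L (by omega) hu] at h0
    exact ⟨u, hu, by omega⟩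
  · rintro ⟨u, hu, h0⟩
    refine ⟨u, hu, ?_⟩
    rw [LOf_truncM L (by omega) hu, h0]
    omega

theorem psum_trunc_row {k n d t : ℕ} {F : ℕ → D} (hF : ∀ u < n, IsFINk k (F u)) (ht : t ≤ d)
    (L : ℕ → ℕ → ℕ) : psum F n (LOf (truncM k (n := n) (d := d) L) t) = psum F n (L t) := by
  rw [← psum_trunc hF (L t)]
  apply psum_congr_l
  intro u hu
  exact LOf_truncM L (by omega) hu

/-! ### The inductive step -/

theorem inv_succ {k r d : ℕ} {hr : 1 ≤ r} {UU : ℕ → Ultrafilter D} {c : (Fin d → D) → Fin r}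
    {F : ℕ → D} {n : ℕ} (hk : 1 ≤ k) (hd : 1 ≤ d) (hch : Chain k UU)
    (hinv : Inv k hr UU c F n) : ∃ F' : ℕ → D, Inv k hr UU c F' (n + 1) := by
  classical
  have hLk : ∀ᶠ h in UU k, IsFINk k h := (hch.2.1 k le_rfl).1
  have hblk : ∀ᶠ h in UU k, ∀ i : Fin n, Blk (F (i : ℕ)) h :=
    Filter.eventually_all.mpr (fun i => ev_blk (hch.2.1 k le_rfl).2 (F (i : ℕ)))
  have hphi : ∀ᶠ h in UU k,
      ∀ σ : Fin d × (Fin (d + 1) → Fin n → Fin (k + 1)) × Fin k × Fin (k + 1),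
        (OKCfg k n (σ.1 : ℕ) (LOf σ.2.1) →
          ((σ.2.2.1 : ℕ) = 0 ∨ ∃ u < n, LOf σ.2.1 (σ.1 : ℕ) u = 0) →
          gamF hr (UU k) c (d - ((σ.1 : ℕ) + 1))
            (Function.update (rowF F n (LOf σ.2.1)) (σ.1 : ℕ)
              (psum F n (LOf σ.2.1 (σ.1 : ℕ)) + Tetris^[(σ.2.2.1 : ℕ)] h))
              = eps0 hr (UU k) c) ∧
        (OKCfg k n (σ.1 : ℕ) (LOf σ.2.1) → 1 ≤ (σ.2.2.2 : ℕ) →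
          ((∃ u < n, LOf σ.2.1 (σ.1 : ℕ) u = 0) ∨ (σ.2.2.1 : ℕ) = 0 ∨ (σ.2.2.2 : ℕ) = k) →
          ∀ᶠ e in UU (σ.2.2.2 : ℕ),
            gamF hr (UU k) c (d - ((σ.1 : ℕ) + 1))
              (Function.update (rowF F n (LOf σ.2.1)) (σ.1 : ℕ)
                (psum F n (LOf σ.2.1 (σ.1 : ℕ)) + Tetris^[(σ.2.2.1 : ℕ)] h + e))
                = eps0 hr (UU k) c) := by
    rw [Filter.eventually_all]
    rintro ⟨t, M, l, j⟩
    have p2 : ∀ᶠ h in UU k,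
        (OKCfg k n (t : ℕ) (LOf M) →
          ((l : ℕ) = 0 ∨ ∃ u < n, LOf M (t : ℕ) u = 0) →
          gamF hr (UU k) c (d - ((t : ℕ) + 1))
            (Function.update (rowF F n (LOf M)) (t : ℕ)
              (psum F n (LOf M (t : ℕ)) + Tetris^[(l : ℕ)] h)) = eps0 hr (UU k) c) := by
      by_cases hcfg : OKCfg k n (t : ℕ) (LOf M)
      · by_cases hfl : ((l : ℕ) = 0 ∨ ∃ u < n, LOf M (t : ℕ) u = 0)
        · filter_upwards [R2_large hch hinv (LOf M) t.isLt l.isLt hcfg hfl] with h hh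
          exact fun _ _ => hh
        · exact Filter.Eventually.of_forall (fun h _ hf => absurd hf hfl)
      · exact Filter.Eventually.of_forall (fun h hc => absurd hc hcfg)
    have p3 : ∀ᶠ h in UU k,
        (OKCfg k n (t : ℕ) (LOf M) → 1 ≤ (j : ℕ) →
          ((∃ u < n, LOf M (t : ℕ) u = 0) ∨ (l : ℕ) = 0 ∨ (j : ℕ) = k) →
          ∀ᶠ e in UU (j : ℕ),
            gamF hr (UU k) c (d - ((t : ℕ) + 1))
              (Function.update (rowF F n (LOf M)) (t : ℕ)
                (psum F n (LOf M (t : ℕ)) + Tetris^[(l : ℕ)] h + e))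
                  = eps0 hr (UU k) c) := by
      by_cases hcfg : OKCfg k n (t : ℕ) (LOf M)
      · by_cases hj1 : 1 ≤ (j : ℕ)
        · by_cases hleg : ((∃ u < n, LOf M (t : ℕ) u = 0) ∨ (l : ℕ) = 0 ∨ (j : ℕ) = k)
          · filter_upwards [R3_large hch hinv (LOf M) t.isLt l.isLt hj1 (by omega) hcfg hleg]
              with h hh
            exact fun _ _ _ => hh
          · exact Filter.Eventually.of_forall (fun h _ _ hf => absurd hf hleg)
        · exact Filter.Eventually.of_forall (fun h _ h1 => absurd h1 hj1)
      · exact Filter.Eventually.of_forall (fun h hc => absurd hc hcfg)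
    exact p2.and p3
  obtain ⟨h, hIs, hbl, hPhi⟩ := (hLk.and (hblk.and hphi)).exists
  refine ⟨Function.update F n h, ?_⟩
  set F' : ℕ → D := Function.update F n h with hF'def
  have hFlt : ∀ u, u < n → F' u = F u := fun u hu => Function.update_of_ne (by omega) _ _
  have hFn : F' n = h := Function.update_self _ _ _
  have hIs' : ∀ i, i < n + 1 → IsFINk k (F' i) := by
    intro i hi
    rcases Nat.lt_or_ge i n with h' | h'
    · rw [hFlt i h']; exact hinv.1 i h'
    · have : i = n := by omega
      subst this; rw [hFn]; exact hIs
  have hpsumn : ∀ l : ℕ → ℕ, psum F' n l = psum F n l :=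
    fun l => psum_congr_F (fun u hu => hFlt u hu) l
  have hpsucc : ∀ l : ℕ → ℕ, psum F' (n + 1) l = psum F n (l) + Tetris^[l n] h := by
    intro l
    rw [psum_succ, hpsumn l, hFn]
  have hkill : ∀ lv : ℕ, ¬ (lv < k) → Tetris^[lv] h = 0 := fun lv hlv =>
    tetris_iter_eq_zero hIs.1 (by omega)
  have hpsame : ∀ l : ℕ → ℕ, ¬ (l n < k) → psum F' (n + 1) l = psum F n l := by
    intro l hl
    rw [hpsucc l, hkill (l n) hl, add_zero]
  have hG2 : ∀ i j, i < j → j < n + 1 → Blk (F' i) (F' j) := by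
    intro i j hij hj
    rcases Nat.lt_or_ge j n with h' | h'
    · rw [hFlt i (by omega), hFlt j h']; exact hinv.2.1 i j hij h'
    · have : j = n := by omega
      subst this
      rw [hFlt i hij, hFn]
      exact hbl ⟨i, hij⟩
  have hI : ∀ t L, t ≤ d → OKTup k (n + 1) t L →
      gamF hr (UU k) c (d - t) (rowF F' (n + 1) L) = eps0 hr (UU k) c := by
    intro t L ht hok
    rcases Nat.eq_zero_or_pos t with h0 | ht1
    · subst h0
      rw [Nat.sub_zero]
      exact gamF_top hr (UU k) c _
    by_cases huse : L (t - 1) n < k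
    · have hnouse : ∀ i, i < t - 1 → ¬ (L i n < k) := by
        intro i hi hin
        have := hok.2 i (t - 1) n n hi (by omega) (by omega) (by omega) hin huse
        omega
      have hcfg : OKCfg k n (t - 1) L := by
        constructor
        · intro i hi
          obtain ⟨u, hu, hu0⟩ := hok.1 i (by omega)
          have hun : u ≠ n := by
            intro hun; rw [hun] at hu0
            exact hnouse i hi (by omega)
          exact ⟨u, by omega, hu0⟩
        · intro i i' u v hii' hi't hu hv hiu hi'v
          exact hok.2 i i' u v hii' (by omega) (by omega) (by omega) hiu hi'v
      have hflag : L (t - 1) n = 0 ∨ ∃ u < n, L (t - 1) u = 0 := by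
        obtain ⟨u, hu, hu0⟩ := hok.1 (t - 1) (by omega)
        rcases Nat.lt_or_ge u n with h' | h'
        · exact Or.inr ⟨u, h', hu0⟩
        · have : u = n := by omega
          subst this; exact Or.inl hu0
      have h2 := (hPhi ⟨⟨t - 1, by omega⟩, truncM k (n := n) (d := d) L,
        ⟨L (t - 1) n, huse⟩, ⟨k, by omega⟩⟩).1
        (OKCfg_trunc hk (by omega) hcfg)
        (by rcases hflag with h' | h'
            · exact Or.inl h'
            · exact Or.inr ((flag_trunc hk (by omega) L).mpr h'))
      have h2' : gamF hr (UU k) c (d - (t - 1 + 1))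
          (Function.update (rowF F n (LOf (truncM k (n := n) (d := d) L))) (t - 1)
            (psum F n (LOf (truncM k (n := n) (d := d) L) (t - 1))
              + Tetris^[L (t - 1) n] h)) = eps0 hr (UU k) c := h2
      have htt : t - 1 + 1 = t := by omega
      rw [htt] at h2'
      have heq : gamF hr (UU k) c (d - t) (rowF F' (n + 1) L)
          = gamF hr (UU k) c (d - t)
            (Function.update (rowF F n (LOf (truncM k (n := n) (d := d) L))) (t - 1)
              (psum F n (LOf (truncM k (n := n) (d := d) L) (t - 1))
                + Tetris^[L (t - 1) n] h)) := by
        apply gamF_congr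
        intro i hi
        have hit : i < t := by omega
        by_cases hitm : i = t - 1
        · subst hitm
          rw [Function.update_self]
          show psum F' (n + 1) (L (t - 1)) = _
          rw [hpsucc, psum_trunc_row hinv.1 (by omega) L]
        · rw [Function.update_of_ne hitm]
          show psum F' (n + 1) (L i) = psum F n (LOf (truncM k (n := n) (d := d) L) i)
          rw [hpsame (L i) (hnouse i (by omega)), psum_trunc_row hinv.1 (by omega) L]
      rw [heq]
      exact h2'
    · have hnouse : ∀ i, i < t → ¬ (L i n < k) := by
        intro i hi hin
        by_cases hitm : i = t - 1
        · subst hitm; exact huse hin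
        · obtain ⟨v, hv, hv0⟩ := hok.1 (i + 1) (by omega)
          have := hok.2 i (i + 1) n v (by omega) (by omega) (by omega) (by omega) hin (by omega)
          omega
      have hok' : OKTup k n t L := by
        constructor
        · intro i hi
          obtain ⟨u, hu, hu0⟩ := hok.1 i hi
          have hun : u ≠ n := by
            intro hun; rw [hun] at hu0
            exact hnouse i hi (by omega)
          exact ⟨u, by omega, hu0⟩
        · intro i i' u v hii' hi't hu hv hiu hi'v
          exact hok.2 i i' u v hii' hi't (by omega) (by omega) hiu hi'v
      have heq : gamF hr (UU k) c (d - t) (rowF F' (n + 1) L)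
          = gamF hr (UU k) c (d - t) (rowF F n L) := by
        apply gamF_congr
        intro i hi
        have hit : i < t := by omega
        exact hpsame (L i) (hnouse i hit)
      rw [heq]
      exact hinv.2.2.1 t L ht hok'
  have hII : ∀ t L j, t < d → OKCfg k (n + 1) t L → 1 ≤ j → j ≤ k →
      ((∃ u < n + 1, L t u = 0) ∨ j = k) →
      ∀ᶠ e in UU j,
        gamF hr (UU k) c (d - (t + 1))
          (Function.update (rowF F' (n + 1) L) t (psum F' (n + 1) (L t) + e))
            = eps0 hr (UU k) c := by
    intro t L j ht hcfg hj1 hjk hleg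
    by_cases huset : L t n < k
    · have hnouse : ∀ i, i < t → ¬ (L i n < k) := by
        intro i hi hin
        have := hcfg.2 i t n n hi le_rfl (by omega) (by omega) hin huset
        omega
      have hcfg' : OKCfg k n t L := by
        constructor
        · intro i hi
          obtain ⟨u, hu, hu0⟩ := hcfg.1 i hi
          have hun : u ≠ n := by
            intro hun; rw [hun] at hu0
            exact hnouse i hi (by omega)
          exact ⟨u, by omega, hu0⟩
        · intro i i' u v hii' hi't hu hv hiu hi'v
          exact hcfg.2 i i' u v hii' hi't (by omega) (by omega) hiu hi'v
      have hleg' : (∃ u < n, LOf (truncM k (n := n) (d := d) L) t u = 0)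
          ∨ L t n = 0 ∨ j = k := by
        rcases hleg with ⟨u, hu, hu0⟩ | hk'
        · rcases Nat.lt_or_ge u n with h' | h'
          · exact Or.inl ((flag_trunc hk (by omega) L).mpr ⟨u, h', hu0⟩)
          · have : u = n := by omega
            subst this
            exact Or.inr (Or.inl hu0)
        · exact Or.inr (Or.inr hk')
      have h3 := (hPhi ⟨⟨t, ht⟩, truncM k (n := n) (d := d) L,
        ⟨L t n, huset⟩, ⟨j, by omega⟩⟩).2
        (OKCfg_trunc hk (by omega) hcfg') hj1 hleg'
      filter_upwards [h3] with e he
      have heq : gamF hr (UU k) c (d - (t + 1))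
          (Function.update (rowF F' (n + 1) L) t (psum F' (n + 1) (L t) + e))
          = gamF hr (UU k) c (d - (t + 1))
            (Function.update (rowF F n (LOf (truncM k (n := n) (d := d) L))) t
              (psum F n (LOf (truncM k (n := n) (d := d) L) t) + Tetris^[L t n] h + e)) := by
        apply gamF_congr
        intro i hi
        have hit : i < t + 1 := by omega
        by_cases hitm : i = t
        · subst hitm
          rw [Function.update_self, Function.update_self, hpsucc,
            psum_trunc_row hinv.1 (by omega) L]
        · rw [Function.update_of_ne hitm, Function.update_of_ne hitm]
          show psum F' (n + 1) (L i) = psum F n (LOf (truncM k (n := n) (d := d) L) i)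
          rw [hpsame (L i) (hnouse i (by omega)), psum_trunc_row hinv.1 (by omega) L]
      rw [heq]
      exact he
    · by_cases huselast : 1 ≤ t ∧ L (t - 1) n < k
      · obtain ⟨ht1, hlast⟩ := huselast
        have hrowt : ∀ u, u < n + 1 → ¬ (L t u < k) := by
          intro u hu hlt
          have := hcfg.2 (t - 1) t n u (by omega) le_rfl (by omega) hu hlast hlt
          omega
        have hgz : psum F' (n + 1) (L t) = 0 :=
          psum_unused hIs' (fun u hu => by have := hrowt u hu; omega)
        have hjk' : j = k := by
          rcases hleg with ⟨u, hu, hu0⟩ | hk'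
          · exact absurd (by omega : L t u < k) (hrowt u hu)
          · exact hk'
        have hnouse : ∀ i, i < t - 1 → ¬ (L i n < k) := by
          intro i hi hin
          have := hcfg.2 i (t - 1) n n hi (by omega) (by omega) (by omega) hin hlast
          omega
        have hcfgold : OKCfg k n (t - 1) L := by
          constructor
          · intro i hi
            obtain ⟨u, hu, hu0⟩ := hcfg.1 i (by omega)
            have hun : u ≠ n := by
              intro hun; rw [hun] at hu0
              exact hnouse i hi (by omega)
            exact ⟨u, by omega, hu0⟩
          · intro i i' u v hii' hi't hu hv hiu hi'v
            exact hcfg.2 i i' u v hii' (by omega) (by omega) (by omega) hiu hi'v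
        have hflagc : L (t - 1) n = 0 ∨ ∃ u < n, L (t - 1) u = 0 := by
          obtain ⟨u, hu, hu0⟩ := hcfg.1 (t - 1) (by omega)
          rcases Nat.lt_or_ge u n with h' | h'
          · exact Or.inr ⟨u, h', hu0⟩
          · have : u = n := by omega
            subst this; exact Or.inl hu0
        have h2 := (hPhi ⟨⟨t - 1, by omega⟩, truncM k (n := n) (d := d) L,
          ⟨L (t - 1) n, hlast⟩, ⟨k, by omega⟩⟩).1
          (OKCfg_trunc hk (by omega) hcfgold)
          (by rcases hflagc with h' | h'
              · exact Or.inl h'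
              · exact Or.inr ((flag_trunc hk (by omega) L).mpr h'))
        have h2' : gamF hr (UU k) c (d - (t - 1 + 1))
            (Function.update (rowF F n (LOf (truncM k (n := n) (d := d) L))) (t - 1)
              (psum F n (LOf (truncM k (n := n) (d := d) L) (t - 1))
                + Tetris^[L (t - 1) n] h)) = eps0 hr (UU k) c := h2
        have htt : t - 1 + 1 = t := by omega
        rw [htt] at h2'
        have hsucc := gamF_succ hr (UU k) c ht
          (Function.update (rowF F n (LOf (truncM k (n := n) (d := d) L))) (t - 1)
            (psum F n (LOf (truncM k (n := n) (d := d) L) (t - 1))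
              + Tetris^[L (t - 1) n] h))
        rw [h2'] at hsucc
        have hspec := uColor_spec hr (UU k)
          (fun e => gamF hr (UU k) c (d - (t + 1))
            (Function.update
              (Function.update (rowF F n (LOf (truncM k (n := n) (d := d) L))) (t - 1)
                (psum F n (LOf (truncM k (n := n) (d := d) L) (t - 1))
                  + Tetris^[L (t - 1) n] h)) t e))
        rw [← hsucc] at hspec
        rw [hjk']
        filter_upwards [hspec] with e he
        have heq : gamF hr (UU k) c (d - (t + 1))
            (Function.update (rowF F' (n + 1) L) t (psum F' (n + 1) (L t) + e))
            = gamF hr (UU k) c (d - (t + 1))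
              (Function.update
                (Function.update (rowF F n (LOf (truncM k (n := n) (d := d) L))) (t - 1)
                  (psum F n (LOf (truncM k (n := n) (d := d) L) (t - 1))
                    + Tetris^[L (t - 1) n] h)) t e) := by
          apply gamF_congr
          intro i hi
          have hit : i < t + 1 := by omega
          by_cases hitm : i = t
          · subst hitm
            rw [Function.update_self, Function.update_self, hgz, zero_add]
          · rw [Function.update_of_ne hitm, Function.update_of_ne hitm]
            by_cases hitm1 : i = t - 1
            · subst hitm1
              rw [Function.update_self]
              show psum F' (n + 1) (L (t - 1)) = _
              rw [hpsucc, psum_trunc_row hinv.1 (by omega) L]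
            · rw [Function.update_of_ne hitm1]
              show psum F' (n + 1) (L i) = psum F n (LOf (truncM k (n := n) (d := d) L) i)
              rw [hpsame (L i) (hnouse i (by omega)), psum_trunc_row hinv.1 (by omega) L]
        rw [heq]
        exact he
      · have hnouse : ∀ i, i ≤ t → ¬ (L i n < k) := by
          intro i hi hin
          by_cases hit' : i = t
          · subst hit'; exact huset hin
          · by_cases hit1 : i = t - 1
            · subst hit1
              exact huselast ⟨by omega, hin⟩
            · obtain ⟨v, hv, hv0⟩ := hcfg.1 (i + 1) (by omega)
              have := hcfg.2 i (i + 1) n v (by omega) (by omega) (by omega) (by omega) hin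
                (by omega)
              omega
        have hcfg' : OKCfg k n t L := by
          constructor
          · intro i hi
            obtain ⟨u, hu, hu0⟩ := hcfg.1 i hi
            have hun : u ≠ n := by
              intro hun; rw [hun] at hu0
              exact hnouse i (by omega) (by omega)
            exact ⟨u, by omega, hu0⟩
          · intro i i' u v hii' hi't hu hv hiu hi'v
            exact hcfg.2 i i' u v hii' hi't (by omega) (by omega) hiu hi'v
        have hleg' : (∃ u < n, L t u = 0) ∨ j = k := by
          rcases hleg with ⟨u, hu, hu0⟩ | hk'
          · have hun : u ≠ n := by
              intro hun; rw [hun] at hu0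
              exact hnouse t le_rfl (by omega)
            exact Or.inl ⟨u, by omega, hu0⟩
          · exact Or.inr hk'
        have h4 := hinv.2.2.2 t L j ht hcfg' hj1 hjk hleg'
        filter_upwards [h4] with e he
        have heq : gamF hr (UU k) c (d - (t + 1))
            (Function.update (rowF F' (n + 1) L) t (psum F' (n + 1) (L t) + e))
            = gamF hr (UU k) c (d - (t + 1))
              (Function.update (rowF F n L) t (psum F n (L t) + e)) := by
          apply gamF_congr
          intro i hi
          by_cases hitm : i = t
          · rw [hitm, Function.update_self, Function.update_self,
              hpsame (L t) (hnouse t le_rfl)]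
          · rw [Function.update_of_ne hitm, Function.update_of_ne hitm]
            exact hpsame (L i) (hnouse i (by omega))
        rw [heq]
        exact he
  exact ⟨hIs', hG2, hI, hII⟩

theorem inv_exists {k r d : ℕ} (hr : 1 ≤ r) {UU : ℕ → Ultrafilter D}
    {c : (Fin d → D) → Fin r} (hk : 1 ≤ k) (hd : 1 ≤ d) (hch : Chain k UU) :
    ∀ n, ∃ F, Inv k hr UU c F n := by
  intro n
  induction n with
  | zero => exact ⟨fun _ => 0, inv_zero hd hr UU c _⟩
  | succ n ih =>
    obtain ⟨F, hF⟩ := ih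
    exact inv_succ hk hd hch hF

/-! ### From semantic combinatorial-space membership to parametrizations -/

theorem psum_apply_attain {k m : ℕ} {F : ℕ → D} (hk : 1 ≤ k)
    (hIs : ∀ i < m, IsFINk k (F i)) (hblk : ∀ i j, i < j → j < m → Blk (F i) (F j))
    {u p : ℕ} (hu : u < m) (hp : F u p = k) (l : ℕ → ℕ) :
    psum F m l p = k - l u := by
  have hpsupp : p ∈ (F u).support := Finsupp.mem_support_iff.mpr (by omega)
  have happ : psum F m l p = ∑ v ∈ Finset.range m, (Tetris^[l v] (F v)) p := by
    rw [psum]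
    exact Finsupp.finset_sum_apply _ _ _
  rw [happ, Finset.sum_eq_single u]
  · rw [tetris_iter_apply, hp]
  · intro v hv hvu
    have hvm : v < m := Finset.mem_range.mp hv
    have hFvp : F v p = 0 := by
      by_contra hne
      have hpv : p ∈ (F v).support := Finsupp.mem_support_iff.mpr hne
      rcases Nat.lt_or_ge v u with h' | h'
      · exact absurd (hblk v u h' hu p hpv p hpsupp) (lt_irrefl p)
      · have : u < v := by omega
        exact absurd (hblk u v this hvm p hpsupp p hpv) (lt_irrefl p)
    rw [tetris_iter_apply, hFvp]
    omega
  · intro hum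
    exact absurd (Finset.mem_range.mpr hu) hum

theorem combSpace_elem_eq {k m : ℕ} {F : ℕ → D} (hIs : ∀ i < m, IsFINk k (F i)) {g : D}
    (hg : g ∈ CombSpace m F) :
    ∃ l : ℕ → ℕ, (∀ u, l u ≤ k) ∧ (∃ u < m, l u = 0) ∧ g = psum F m l := by
  obtain ⟨s, l0, hne, hlt, ⟨i0, hi0, hl0⟩, hsum⟩ := hg
  classical
  refine ⟨fun u => if u ∈ s then min (l0 u) k else k, ?_, ?_, ?_⟩
  · intro u
    show (if u ∈ s then min (l0 u) k else k) ≤ k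
    split <;> omega
  · refine ⟨i0, hlt i0 hi0, ?_⟩
    show (if i0 ∈ s then min (l0 i0) k else k) = 0
    rw [if_pos hi0, hl0]
    omega
  · rw [hsum, psum]
    rw [← Finset.sum_subset (fun x hx => Finset.mem_range.mpr (hlt x hx))
      (fun x hx hxs => ?_)]
    · apply Finset.sum_congr rfl
      intro u hu
      simp only [if_pos hu]
      exact (tetris_trunc (hIs u (hlt u hu)).1 (l0 u)).symm
    · simp only [if_neg hxs]
      exact tetris_iter_eq_zero (hIs x (Finset.mem_range.mp hx)).1 le_rfl

theorem combSpace_finite {k m : ℕ} {F : ℕ → D} (hIs : ∀ i < m, IsFINk k (F i)) :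
    (CombSpace m F).Finite := by
  classical
  have : CombSpace m F ⊆ Set.range
      (fun v : Fin m → Fin (k + 1) =>
        psum F m (fun u => if h : u < m then (v ⟨u, h⟩ : ℕ) else 0)) := by
    intro g hg
    obtain ⟨l, hl, _, rfl⟩ := combSpace_elem_eq hIs hg
    refine ⟨fun u => ⟨l (u : ℕ), by have := hl (u : ℕ); omega⟩, ?_⟩
    apply psum_congr_l
    intro u hu
    simp [hu]
  exact Set.Finite.subset (Set.finite_range _) this

/-- The core theorem: monochromatic combinatorial spaces for a single coloring. -/
theorem core (k d r m : ℕ) (hk : 1 ≤ k) (hd : 1 ≤ d) (hr : 1 ≤ r)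
    (c : (Fin d → D) → Fin r) :
    ∃ (F : ℕ → D) (ε : Fin r),
      (∀ i < m, IsFINk k (F i)) ∧ (∀ i j, i < j → j < m → Blk (F i) (F j)) ∧
      ∀ G : Fin d → D, (∀ i j : Fin d, i < j → Blk (G i) (G j)) →
        (∀ i, G i ∈ CombSpace m F) → c G = eps0 hr ((Classical.choose (exists_chain k)) k) c := by
  classical
  obtain ⟨F, hinv⟩ := inv_exists hr hk hd (Classical.choose_spec (exists_chain k)) m
  set UU := Classical.choose (exists_chain k) with hUU
  refine ⟨F, eps0 hr (UU k) c, hinv.1, hinv.2.1, ?_⟩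
  intro G hGt hGm
  have hIs := hinv.1
  have hblk := hinv.2.1
  -- normalize each entry
  have hrows : ∀ i : Fin d, ∃ l : ℕ → ℕ, (∀ u, l u ≤ k) ∧ (∃ u < m, l u = 0) ∧
      G i = psum F m l := fun i => combSpace_elem_eq hIs (hGm i)
  choose lrow hlb hlz hlsum using hrows
  set L : ℕ → ℕ → ℕ := fun i u => if hi : i < d then lrow ⟨i, hi⟩ u else k with hL
  have hLrow : ∀ i : Fin d, rowF F m L (i : ℕ) = G i := by
    intro i
    show psum F m (L (i : ℕ)) = G i
    rw [hlsum i]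
    apply psum_congr_l
    intro u hu
    simp only [hL, i.isLt, dif_pos]
  have hok : OKTup k m d L := by
    constructor
    · intro i hi
      obtain ⟨u, hu, hu0⟩ := hlz ⟨i, hi⟩
      refine ⟨u, hu, ?_⟩
      simp only [hL, hi, dif_pos]
      exact hu0
    · intro i i' u v hii' hi't hu hv hiu hi'v
      have hi : i < d := by omega
      simp only [hL, hi, hi't, dif_pos] at hiu hi'v
      -- attain points
      obtain ⟨p, hpk⟩ := (hIs u hu).2
      obtain ⟨q, hqk⟩ := (hIs v hv).2
      have hpG : p ∈ (G ⟨i, hi⟩).support := by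
        rw [hlsum ⟨i, hi⟩]
        apply Finsupp.mem_support_iff.mpr
        rw [psum_apply_attain hk hIs hblk hu hpk]
        omega
      have hqG : q ∈ (G ⟨i', hi't⟩).support := by
        rw [hlsum ⟨i', hi't⟩]
        apply Finsupp.mem_support_iff.mpr
        rw [psum_apply_attain hk hIs hblk hv hqk]
        omega
      have hpq : p < q := hGt ⟨i, hi⟩ ⟨i', hi't⟩ (by simp [Fin.lt_def]; omega) p hpG q hqG
      by_contra hvu
      push_neg at hvu
      rcases Nat.lt_or_ge v u with h' | h'
      · have hpsupp : p ∈ (F u).support := Finsupp.mem_support_iff.mpr (by omega)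
        have hqsupp : q ∈ (F v).support := Finsupp.mem_support_iff.mpr (by omega)
        have := hblk v u h' hu q hqsupp p hpsupp
        omega
      · have huv : u = v := by omega
        subst huv
        have hqG' : p ∈ (G ⟨i', hi't⟩).support := by
          rw [hlsum ⟨i', hi't⟩]
          apply Finsupp.mem_support_iff.mpr
          rw [psum_apply_attain hk hIs hblk hu hpk]
          omega
        have := hGt ⟨i, hi⟩ ⟨i', hi't⟩ (by simp [Fin.lt_def]; omega) p hpG p hqG'
        omega
  have := hinv.2.2.1 d L le_rfl hok
  rw [Nat.sub_self] at this
  have hc : gamF hr (UU k) c 0 (rowF F m L) = c G := by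
    show c _ = c G
    congr 1
    funext i
    exact hLrow i
  rw [← hc, this]

end GowersAux

/-- **Finite `FIN_k` theorem, multidimensional form.** For all `k ≥ 1`, `m`, `r ≥ 1`, `d ≥ 1`
there is `n` such that every `r`-coloring of the block sequences of length `d` in `FIN_k(n)`
admits a block sequence of length `m` in `FIN_k(n)` such that the coloring is constant on the
block sequences of length `d` contained in its combinatorial space. -/
theorem finite_FINk_theorem_multidim (k m r d : ℕ) (hk : 1 ≤ k) (hr : 1 ≤ r) (hd : 1 ≤ d) :
    ∃ n : ℕ, ∀ c : (Fin d → (ℕ →₀ ℕ)) → Fin r,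
      ∃ F : ℕ → (ℕ →₀ ℕ),
        (∀ i < m, F i ∈ FINkN k n) ∧ IsBlockSeqFin m F ∧
        ∀ G H : Fin d → (ℕ →₀ ℕ),
          IsBlockTuple d G → (∀ i, G i ∈ CombSpace m F) →
          IsBlockTuple d H → (∀ i, H i ∈ CombSpace m F) →
          c G = c H := by
  classical
  by_contra hcon
  push_neg at hcon
  choose cn hcn using hcon
  set 𝒩 : Ultrafilter ℕ := Filter.hyperfilter ℕ with h𝒩
  set C : (Fin d → (ℕ →₀ ℕ)) → Fin r := fun G => GowersAux.uColor hr 𝒩 (fun n => cn n G)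
    with hC
  obtain ⟨F, ε, hIs, hblk, hmono⟩ := GowersAux.core k d r m hk hd hr C
  set N0 : ℕ := (Finset.range m).sup (fun i => (F i).support.sup id) + 1 with hN0
  have hsupp : ∀ i < m, ∀ p ∈ (F i).support, p < N0 := by
    intro i hi p hp
    have h1 : p ≤ (F i).support.sup id := Finset.le_sup (f := id) hp
    have h2 : (F i).support.sup id ≤ (Finset.range m).sup (fun i => (F i).support.sup id) :=
      Finset.le_sup (f := fun i => (F i).support.sup id) (Finset.mem_range.mpr hi)
    omega
  set T : Set (Fin d → (ℕ →₀ ℕ)) := {G | ∀ i, G i ∈ CombSpace m F} with hT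
  have hTfin : T.Finite := by
    have : T = Set.pi Set.univ (fun _ : Fin d => CombSpace m F) := by
      ext G
      simp [Set.mem_pi, hT]
    rw [this]
    exact Set.Finite.pi (fun _ => GowersAux.combSpace_finite hIs)
  have hev : ∀ᶠ n in (𝒩 : Filter ℕ), N0 ≤ n ∧ ∀ G ∈ T, cn n G = C G := by
    apply Filter.Eventually.and
    · have hcof : ∀ᶠ x in Filter.cofinite, N0 ≤ x := by
        rw [Nat.cofinite_eq_atTop]
        exact Filter.eventually_ge_atTop N0
      exact hcof.filter_mono (Filter.hyperfilter_le_cofinite)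
    · rw [Filter.eventually_all_finite hTfin]
      intro G hG
      exact GowersAux.uColor_spec hr 𝒩 (fun n => cn n G)
  obtain ⟨n, hn1, hn2⟩ := hev.exists
  obtain ⟨G, H, hGt, hGm, hHt, hHm, hne⟩ := hcn n F
    (fun i hi => ⟨hIs i hi, fun p hp => lt_of_lt_of_le (hsupp i hi p hp) hn1⟩)
    hblk
  have h1 : C G = _ := hmono G hGt hGm
  have h2 : C H = _ := hmono H hHt hHm
  exact hne (by rw [hn2 G hGm, hn2 H hHm, h1, h2])
end

section
/- (Folkman's Theorem, finite unions form) For all natural numbers m and r ≥ 1 there exists a natural number N such that for every coloring c of the nonempty subsets of {0,…,N−1} with r colors there exists a block sequence x_0 < x_1 < … < x_{m−1} of nonempty subsets of {0,…,N−1} such that c is constant on the set of all unions ⋃_{i∈s} x_i over nonempty s ⊆ {0,…,m−1}. -/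
/-- The block relation on finite sets: `max x < min y`. -/
def BlkS (x y : Finset ℕ) : Prop :=
  ∀ i ∈ x, ∀ j ∈ y, i < j

/-- `(X i)_{i<m}` is a block sequence of nonempty finite sets. -/
def IsBlockSeqS (m : ℕ) (X : ℕ → Finset ℕ) : Prop :=
  ∀ i j : ℕ, i < j → j < m → BlkS (X i) (X j)

/-- `(G i)_{i<d}` is a block sequence (a `d`-tuple version). -/
def IsBlockTupleS (d : ℕ) (G : Fin d → Finset ℕ) : Prop :=
  ∀ i j : Fin d, i < j → BlkS (G i) (G j)

/-- The combinatorial space `⟨X i⟩_{i<m}`: all unions `⋃_{i ∈ s} X i` with `∅ ≠ s ⊆ {0,…,m-1}`. -/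
def CombSpaceS (m : ℕ) (X : ℕ → Finset ℕ) : Set (Finset ℕ) :=
  {z | ∃ s : Finset ℕ, s.Nonempty ∧ (∀ i ∈ s, i < m) ∧ z = s.biUnion X}


open Finset in
def bitsupp (n : ℕ) : Finset ℕ := n.bitIndices.toFinset

lemma val_bitsupp (n : ℕ) : ∑ i ∈ bitsupp n, 2 ^ i = n :=
  Finset.twoPowSum_toFinset_bitIndices n

lemma bitsupp_val (s : Finset ℕ) : bitsupp (∑ i ∈ s, 2 ^ i) = s :=
  Finset.toFinset_bitIndices_twoPowSum s

lemma bitsupp_nonempty {n : ℕ} (hn : 0 < n) : (bitsupp n).Nonempty := by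
  rcases Finset.eq_empty_or_nonempty (bitsupp n) with h | h
  · exfalso
    have := val_bitsupp n
    rw [h, Finset.sum_empty] at this
    omega
  · exact h

lemma le_of_dvd_mem_bitsupp {K n a : ℕ} (h : 2 ^ K ∣ n) (ha : a ∈ bitsupp n) : K ≤ a := by
  obtain ⟨m, rfl⟩ := h
  rw [bitsupp, List.mem_toFinset, Nat.bitIndices_two_pow_mul, List.mem_map] at ha
  obtain ⟨x, _, rfl⟩ := ha
  omega

lemma lt_of_mem_bitsupp {n K a : ℕ} (hn : n < 2 ^ K) (ha : a ∈ bitsupp n) : a < K := by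
  have h2 : 2 ^ a ≤ n := Nat.two_pow_le_of_mem_bitIndices (List.mem_toFinset.mp ha)
  have := h2.trans_lt hn
  exact (Nat.pow_lt_pow_iff_right one_lt_two).mp this

lemma FS_pos : ∀ {a : Stream' ℕ} {m : ℕ}, m ∈ Hindman.FS a → (∀ i, 0 < a.get i) → 0 < m := by
  intro a m hm
  induction hm with
  | head' b => exact fun h => h 0
  | tail' b n h ih => exact fun hb => ih fun i => hb (i + 1)
  | cons' b n h ih => exact fun hb => Nat.add_pos_left (hb 0) _

lemma exists_good_interval (b : Stream' ℕ) (t K : ℕ) :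
    ∃ p : ℕ × ℕ, t ≤ p.1 ∧ p.1 < p.2 ∧ 2 ^ K ∣ ∑ l ∈ Finset.Ico p.1 p.2, b.get l := by
  have hpos : 0 < 2 ^ K := Nat.pow_pos (by norm_num)
  have hmaps : ∀ i ∈ Finset.range (2 ^ K + 1),
      (∑ l ∈ Finset.Ico t (t + i), b.get l) % 2 ^ K ∈ Finset.range (2 ^ K) := by
    intro i _
    exact Finset.mem_range.mpr (Nat.mod_lt _ hpos)
  have hcard : (Finset.range (2 ^ K)).card < (Finset.range (2 ^ K + 1)).card := by
    simp
  obtain ⟨i, hi, j, hj, hne, hfe⟩ :=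
    Finset.exists_ne_map_eq_of_card_lt_of_maps_to hcard hmaps
  wlog hij : i < j generalizing i j
  · exact this j hj i hi hne.symm hfe.symm (by omega)
  refine ⟨(t + i, t + j), by omega, by omega, ?_⟩
  have hsplit : ∑ l ∈ Finset.Ico t (t + i), b.get l + ∑ l ∈ Finset.Ico (t + i) (t + j), b.get l
      = ∑ l ∈ Finset.Ico t (t + j), b.get l :=
    Finset.sum_Ico_consecutive _ (by omega) (by omega)
  have hmod : (∑ l ∈ Finset.Ico t (t + i), b.get l) ≡
      (∑ l ∈ Finset.Ico t (t + j), b.get l) [MOD 2 ^ K] := hfe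
  have := (Nat.modEq_iff_dvd' (by omega : ∑ l ∈ Finset.Ico t (t + i), b.get l ≤
      ∑ l ∈ Finset.Ico t (t + j), b.get l)).mp hmod
  simpa [← hsplit] using this


lemma infinite_folkman {r : ℕ} (hr : 1 ≤ r) (c : Finset ℕ → Fin r) :
    ∃ X : ℕ → Finset ℕ, (∀ i, (X i).Nonempty) ∧ (∀ i j, i < j → BlkS (X i) (X j)) ∧
      ∃ k : Fin r, ∀ s : Finset ℕ, s.Nonempty → c (s.biUnion X) = k := by
  have hne : Nonempty (Fin r) := ⟨⟨0, hr⟩⟩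
  set a : Stream' ℕ := fun n => 2 ^ n with ha
  set S : Set (Set ℕ) := Set.range (fun k : Fin r => {n | 0 < n ∧ c (bitsupp n) = k}) with hS
  have hfin : S.Finite := Set.finite_range _
  have hcov : Hindman.FS a ⊆ ⋃₀ S := by
    intro n hn
    have hpos : 0 < n := FS_pos hn (fun i => Nat.pow_pos (by norm_num))
    exact ⟨{x | 0 < x ∧ c (bitsupp x) = c (bitsupp n)}, ⟨c (bitsupp n), rfl⟩, hpos, rfl⟩
  obtain ⟨C, hCS, b, hb⟩ := Hindman.FS_partition_regular a S hfin hcov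
  obtain ⟨k, rfl⟩ := hCS
  have hbpos : ∀ i, 0 < b.get i := fun i => (hb (Hindman.FS.singleton b i)).1
  have hsum : ∀ s : Finset ℕ, s.Nonempty →
      0 < (∑ l ∈ s, b.get l) ∧ c (bitsupp (∑ l ∈ s, b.get l)) = k :=
    fun s hs => hb (Hindman.FS.finset_sum b s hs)
  set P : ℕ → ℕ := fun t => ∑ l ∈ Finset.range t, b.get l with hP
  set nxt : ℕ → ℕ × ℕ := fun t => Classical.choose (exists_good_interval b t (P t + 1)) with hnxt
  have hspec : ∀ t, t ≤ (nxt t).1 ∧ (nxt t).1 < (nxt t).2 ∧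
      2 ^ (P t + 1) ∣ ∑ l ∈ Finset.Ico (nxt t).1 (nxt t).2, b.get l :=
    fun t => Classical.choose_spec (exists_good_interval b t (P t + 1))
  set T : ℕ → ℕ := fun j => Nat.rec 0 (fun _ t => (nxt t).2) j with hT
  have hTs : ∀ j, T (j + 1) = (nxt (T j)).2 := fun j => rfl
  set I : ℕ → Finset ℕ := fun j => Finset.Ico (nxt (T j)).1 (T (j+1)) with hI
  set u : ℕ → ℕ := fun j => ∑ l ∈ I j, b.get l with hu
  have hIsub : ∀ j, I j ⊆ Finset.Ico (T j) (T (j+1)) :=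
    fun j => Finset.Ico_subset_Ico (hspec (T j)).1 le_rfl
  have hInonempty : ∀ j, (I j).Nonempty := by
    intro j
    refine Finset.nonempty_Ico.mpr ?_
    rw [hTs]
    exact (hspec (T j)).2.1
  have hdvd : ∀ j, 2 ^ (P (T j) + 1) ∣ u j := by
    intro j
    have := (hspec (T j)).2.2
    rwa [← hTs] at this
  have hupos : ∀ j, 0 < u j := fun j => Finset.sum_pos (fun l _ => hbpos l) (hInonempty j)
  have hTmono : Monotone T := monotone_nat_of_le_succ (fun j => by
    rw [hTs]; have h1 := (hspec (T j)).1; have h2 := (hspec (T j)).2.1; omega)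
  have hPmono : Monotone P := fun t t' h => Finset.sum_le_sum_of_subset (Finset.range_subset_range.mpr h)
  have hub : ∀ j, u j ≤ P (T (j+1)) := by
    intro j
    apply Finset.sum_le_sum_of_subset
    intro l hl
    have h := hIsub j hl
    simp only [Finset.mem_Ico] at h
    exact Finset.mem_range.mpr h.2
  set X : ℕ → Finset ℕ := fun j => bitsupp (u j) with hX
  have hblk : ∀ i j, i < j → BlkS (X i) (X j) := by
    intro i j hij x hx y hy
    have h1 : u i < 2 ^ (P (T j) + 1) := by
      have h2 := hub i
      have h3 : P (T (i+1)) ≤ P (T j) := hPmono (hTmono hij)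
      have h4 : P (T j) < 2 ^ (P (T j) + 1) :=
        lt_of_lt_of_le (Nat.lt_two_pow_self (n := P (T j))) (Nat.pow_le_pow_right (by norm_num) (by omega))
      omega
    have hx' : x < P (T j) + 1 := lt_of_mem_bitsupp h1 hx
    have hy' : P (T j) + 1 ≤ y := le_of_dvd_mem_bitsupp (hdvd j) hy
    omega
  refine ⟨X, fun j => bitsupp_nonempty (hupos j), hblk, k, ?_⟩
  intro s hs
  have hXdisj : (↑s : Set ℕ).PairwiseDisjoint X := by
    intro i _ j _ hij
    rcases hij.lt_or_gt with h | h
    · exact Finset.disjoint_left.mpr (fun x hx hx' => absurd (hblk i j h x hx x hx') (lt_irrefl x))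
    · exact Finset.disjoint_left.mpr (fun x hx hx' => absurd (hblk j i h x hx' x hx) (lt_irrefl x))
  have hIdisj : (↑s : Set ℕ).PairwiseDisjoint I := by
    have key : ∀ i j, i < j → Disjoint (I i) (I j) := by
      intro i j h
      refine Finset.disjoint_left.mpr (fun l hl hl' => ?_)
      have h1 := hIsub i hl
      have h2 := hIsub j hl'
      simp only [Finset.mem_Ico] at h1 h2
      have h3 : T (i+1) ≤ T j := hTmono h
      omega
    intro i _ j _ hij
    rcases hij.lt_or_gt with h | h
    · exact key i j h
    · exact (key j i h).symm
  have hval : ∑ x ∈ s.biUnion X, 2 ^ x = ∑ i ∈ s, u i := by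
    rw [Finset.sum_biUnion hXdisj]
    exact Finset.sum_congr rfl (fun i _ => val_bitsupp (u i))
  have hsum2 : ∑ i ∈ s, u i = ∑ l ∈ s.biUnion I, b.get l := by
    rw [Finset.sum_biUnion hIdisj]
  have hbiUne : (s.biUnion I).Nonempty := by
    obtain ⟨i, hi⟩ := hs
    obtain ⟨l, hl⟩ := hInonempty i
    exact ⟨l, Finset.mem_biUnion.mpr ⟨i, hi, hl⟩⟩
  have hfin2 := hsum (s.biUnion I) hbiUne
  have hz : bitsupp (∑ l ∈ s.biUnion I, b.get l) = s.biUnion X := by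
    rw [← hsum2, ← hval, bitsupp_val]
  rw [hz] at hfin2
  exact hfin2.2


/-- **Folkman's theorem (finite unions form).** For all `m` and `r ≥ 1` there is `N` such that
for every `r`-coloring of the nonempty subsets of `{0,…,N-1}` there is a block sequence
`x_0 < … < x_{m-1}` of nonempty subsets of `{0,…,N-1}` such that the coloring is constant on
all unions `⋃_{i ∈ s} x_i`, `∅ ≠ s ⊆ {0,…,m-1}`. -/
theorem folkman_finite_unions (m r : ℕ) (hr : 1 ≤ r) :
    ∃ N : ℕ, ∀ c : Finset ℕ → Fin r,
      ∃ X : ℕ → Finset ℕ,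
        (∀ i < m, (X i).Nonempty ∧ ∀ a ∈ X i, a < N) ∧ IsBlockSeqS m X ∧
        ∀ x ∈ CombSpaceS m X, ∀ y ∈ CombSpaceS m X, c x = c y := by
  classical
  by_contra hcon
  push_neg at hcon
  have h' : ∀ N : ℕ, ∃ c : Finset ℕ → Fin r, ∀ X : ℕ → Finset ℕ,
      ¬ ((∀ i < m, (X i).Nonempty ∧ ∀ a ∈ X i, a < N) ∧ IsBlockSeqS m X ∧
        ∀ x ∈ CombSpaceS m X, ∀ y ∈ CombSpaceS m X, c x = c y) := by
    intro N
    obtain ⟨c, hc⟩ := hcon N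
    exact ⟨c, fun X hX => by
      obtain ⟨h1, h2, h3⟩ := hX
      obtain ⟨x, hx, y, hy, hne⟩ := hc X h1 h2
      exact hne (h3 x hx y hy)⟩
  choose cN hcN using h'
  set U := Filter.hyperfilter ℕ with hU
  have hex : ∀ s : Finset ℕ, ∃ k : Fin r, {N | cN N s = k} ∈ U := by
    intro s
    have hcov : (⋃ k ∈ (Set.univ : Set (Fin r)), {N | cN N s = k}) ∈ U := by
      have heq : (⋃ k ∈ (Set.univ : Set (Fin r)), {N | cN N s = k}) = Set.univ := by
        ext N; simp
      rw [heq]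
      exact Filter.univ_mem
    obtain ⟨k, _, hkk⟩ := (Ultrafilter.finite_biUnion_mem_iff Set.finite_univ).mp hcov
    exact ⟨k, hkk⟩
  choose cinf hcinf using hex
  obtain ⟨X, hXne, hXblk, k, hk⟩ := infinite_folkman hr cinf
  set B : ℕ := ((Finset.range m).sup fun i => (X i).sup id) + 1 with hB
  set Z : Finset (Finset ℕ) :=
    ((Finset.range m).powerset.filter Finset.Nonempty).image (fun s => s.biUnion X) with hZ
  have hA : (⋂ z ∈ (↑Z : Set (Finset ℕ)), {N | cN N z = cinf z}) ∈ U :=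
    (Filter.biInter_mem Z.finite_toSet).mpr (fun z _ => hcinf z)
  have hBmem : {N : ℕ | B < N} ∈ U := by
    have heq : {N : ℕ | B < N} = (Set.Iic B)ᶜ := by
      ext N; simp [Set.mem_Iic]
    rw [heq]
    exact Filter.compl_mem_hyperfilter_of_finite (Set.finite_Iic B)
  obtain ⟨N, hN1, hN2⟩ := Ultrafilter.nonempty_of_mem (Filter.inter_mem hA hBmem)
  refine hcN N X ⟨?_, ?_, ?_⟩
  · intro i him
    refine ⟨hXne i, fun a ha => ?_⟩
    have h1 : a ≤ (X i).sup id := Finset.le_sup (f := id) ha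
    have h2 : (X i).sup id ≤ (Finset.range m).sup fun i => (X i).sup id :=
      Finset.le_sup (f := fun i => (X i).sup id) (Finset.mem_range.mpr him)
    have h3 : B < N := hN2
    omega
  · exact fun i j hij _ => hXblk i j hij
  · rintro x ⟨s, hs, hsm, rfl⟩ y ⟨t, ht, htm, rfl⟩
    have hmemZ : ∀ (w : Finset ℕ), w.Nonempty → (∀ i ∈ w, i < m) → w.biUnion X ∈ Z := by
      intro w hw hwm
      refine Finset.mem_image.mpr ⟨w, Finset.mem_filter.mpr ⟨?_, hw⟩, rfl⟩
      exact Finset.mem_powerset.mpr (fun i hi => Finset.mem_range.mpr (hwm i hi))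
    have hx := Set.mem_iInter₂.mp hN1 _ (hmemZ s hs hsm)
    have hy := Set.mem_iInter₂.mp hN1 _ (hmemZ t ht htm)
    simp only [Set.mem_setOf_eq] at hx hy
    rw [hx, hy, hk s hs, hk t ht]
end

section
/- For all natural numbers m and r ≥ 1 there exists a natural number N such that for every coloring c of the nonempty subsets of {0,…,N−1} with r colors there exists a block sequence (x_i)_{i<m} of nonempty subsets of {0,…,N−1} such that the restriction of c to the combinatorial space ⟨x_i⟩_{i<m} is min-determined: whenever x = ⋃_{i∈s} x_i and y = ⋃_{i∈t} x_i with nonempty s, t ⊆ {0,…,m−1} and min s = min t, one has c(x) = c(y). -/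
/-- Pigeonhole: some interval sum of a positive stream is divisible by `2^M`. -/
lemma exists_interval_dvd (b : Stream' ℕ) (hb : ∀ i, 1 ≤ b.get i) (p M : ℕ) :
    ∃ q q', p ≤ q ∧ q < q' ∧ 2 ^ M ∣ ∑ i ∈ Finset.Ico q q', b.get i := by
  haveI : NeZero (2 ^ M) := ⟨by positivity⟩
  have key : ∀ j1 j2 : ℕ, j1 < j2 →
      ((∑ i ∈ Finset.Ico p (p + j1), b.get i : ℕ) : ZMod (2 ^ M)) =
      ((∑ i ∈ Finset.Ico p (p + j2), b.get i : ℕ) : ZMod (2 ^ M)) →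
      ∃ q q', p ≤ q ∧ q < q' ∧ 2 ^ M ∣ ∑ i ∈ Finset.Ico q q', b.get i := by
    intro j1 j2 hlt heq
    have hsplit : ∑ i ∈ Finset.Ico p (p + j1), b.get i
        + ∑ i ∈ Finset.Ico (p + j1) (p + j2), b.get i
        = ∑ i ∈ Finset.Ico p (p + j2), b.get i :=
      Finset.sum_Ico_consecutive _ (by omega) (by omega)
    have hz : ((∑ i ∈ Finset.Ico (p + j1) (p + j2), b.get i : ℕ) : ZMod (2 ^ M)) = 0 := by
      have : ((∑ i ∈ Finset.Ico p (p + j1), b.get i : ℕ) : ZMod (2 ^ M))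
          + ((∑ i ∈ Finset.Ico (p + j1) (p + j2), b.get i : ℕ) : ZMod (2 ^ M))
          = ((∑ i ∈ Finset.Ico p (p + j2), b.get i : ℕ) : ZMod (2 ^ M)) := by
        rw [← Nat.cast_add, hsplit]
      rw [heq] at this
      exact add_eq_left.mp this
    exact ⟨p + j1, p + j2, by omega, by omega,
      (ZMod.natCast_eq_zero_iff _ _).mp hz⟩
  have hcard : (Finset.univ : Finset (ZMod (2 ^ M))).card < (Finset.range (2 ^ M + 1)).card := by
    rw [Finset.card_univ, ZMod.card, Finset.card_range]; omega
  obtain ⟨j1, _, j2, _, hne, hfeq⟩ :=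
    Finset.exists_ne_map_eq_of_card_lt_of_maps_to hcard
      (f := fun j => ((∑ i ∈ Finset.Ico p (p + j), b.get i : ℕ) : ZMod (2 ^ M)))
      (fun a _ => Finset.mem_univ _)
  rcases lt_or_gt_of_ne hne with h | h
  · exact key j1 j2 h hfeq
  · exact key j2 j1 h hfeq.symm

/-- Recursive construction of blocks with controlled bit supports. -/
lemma build_blocks (b : Stream' ℕ) (hb : ∀ i, 1 ≤ b.get i) :
    ∀ k : ℕ, ∃ (X I : ℕ → Finset ℕ) (p B : ℕ),
      (∀ i < k, (X i).Nonempty) ∧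
      (∀ i < k, ∀ a ∈ X i, a < B) ∧
      (∀ i j, i < j → j < k → BlkS (X i) (X j)) ∧
      (∀ i < k, (I i).Nonempty) ∧
      (∀ i < k, ∀ j ∈ I i, j < p) ∧
      (∀ i j, i < j → j < k → ∀ u ∈ I i, ∀ v ∈ I j, u < v) ∧
      (∀ i < k, ∑ j ∈ I i, b.get j = ∑ a ∈ X i, 2 ^ a) := by
  intro k
  induction k with
  | zero =>
    refine ⟨fun _ => ∅, fun _ => ∅, 0, 0, ?_, ?_, ?_, ?_, ?_, ?_, ?_⟩ <;>
      first
        | (intro i hi; exact absurd hi (Nat.not_lt_zero _))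
        | (intro i j _ hj; exact absurd hj (Nat.not_lt_zero _))
  | succ k ih =>
    obtain ⟨X, I, p, B, h1, h2, h3, h4, h5, h6, h7⟩ := ih
    obtain ⟨q, q', hpq, hqq, hdvd⟩ := exists_interval_dvd b hb p B
    have hS1 : 1 ≤ ∑ i ∈ Finset.Ico q q', b.get i :=
      le_trans (hb q) (Finset.single_le_sum (fun i _ => Nat.zero_le _)
        (Finset.mem_Ico.mpr ⟨le_refl q, hqq⟩))
    obtain ⟨k', hk'⟩ := hdvd
    set Y := (∑ i ∈ Finset.Ico q q', b.get i).bitIndices.toFinset with hYdef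
    have hYsum : ∑ a ∈ Y, 2 ^ a = ∑ i ∈ Finset.Ico q q', b.get i :=
      Finset.twoPowSum_toFinset_bitIndices _
    have hYne : Y.Nonempty := by
      rcases Y.eq_empty_or_nonempty with h | h
      · rw [h, Finset.sum_empty] at hYsum; omega
      · exact h
    have hYge : ∀ a ∈ Y, B ≤ a := by
      intro a ha
      rw [hYdef, hk', Nat.bitIndices_two_pow_mul, List.mem_toFinset, List.mem_map] at ha
      obtain ⟨x, _, rfl⟩ := ha
      omega
    have hBB : B ≤ Y.max' hYne := hYge _ (Y.max'_mem hYne)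
    set X' : ℕ → Finset ℕ := fun i => if i = k then Y else X i with hX'def
    set I' : ℕ → Finset ℕ := fun i => if i = k then Finset.Ico q q' else I i with hI'def
    have hX'k : X' k = Y := by rw [hX'def]; simp
    have hX'o : ∀ i, i ≠ k → X' i = X i := by intro i h; rw [hX'def]; simp [h]
    have hI'k : I' k = Finset.Ico q q' := by rw [hI'def]; simp
    have hI'o : ∀ i, i ≠ k → I' i = I i := by intro i h; rw [hI'def]; simp [h]
    refine ⟨X', I', q', Y.max' hYne + 1, ?_, ?_, ?_, ?_, ?_, ?_, ?_⟩
    · intro i hi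
      by_cases h : i = k
      · rw [h, hX'k]; exact hYne
      · rw [hX'o i h]; exact h1 i (by omega)
    · intro i hi a ha
      by_cases h : i = k
      · rw [h, hX'k] at ha
        have := Finset.le_max' Y a ha; omega
      · rw [hX'o i h] at ha
        have := h2 i (by omega) a ha; omega
    · intro i j hij hj
      by_cases h : j = k
      · have hik : i < k := by omega
        rw [h, hX'k, hX'o i (by omega)]
        intro a ha bb hbb
        have := h2 i hik a ha
        have := hYge bb hbb
        omega
      · rw [hX'o j h, hX'o i (by omega)]
        exact h3 i j hij (by omega)
    · intro i hi
      by_cases h : i = k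
      · rw [h, hI'k]
        exact Finset.nonempty_Ico.mpr hqq
      · rw [hI'o i h]; exact h4 i (by omega)
    · intro i hi j hj
      by_cases h : i = k
      · rw [h, hI'k] at hj
        rw [Finset.mem_Ico] at hj
        omega
      · rw [hI'o i h] at hj
        have := h5 i (by omega) j hj; omega
    · intro i j hij hj u hu v hv
      by_cases h : j = k
      · rw [h, hI'k, Finset.mem_Ico] at hv
        rw [hI'o i (by omega)] at hu
        have := h5 i (by omega) u hu
        omega
      · rw [hI'o j h] at hv
        rw [hI'o i (by omega)] at hu
        exact h6 i j hij (by omega) u hu v hv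
    · intro i hi
      by_cases h : i = k
      · rw [h, hI'k, hX'k]
        exact hYsum.symm
      · rw [hI'o i h, hX'o i h]
        exact h7 i (by omega)

/-- The infinite monochromatic finite-unions theorem, from Hindman's theorem. -/
lemma exists_mono_blocks (r : ℕ) (c : Finset ℕ → Fin r) (hr : 1 ≤ r) (m : ℕ) :
    ∃ (X : ℕ → Finset ℕ) (v : Fin r),
      (∀ i < m, (X i).Nonempty) ∧ IsBlockSeqS m X ∧
      ∀ s : Finset ℕ, s.Nonempty → (∀ i ∈ s, i < m) → c (s.biUnion X) = v := by
  have keypos : ∀ (a : Stream' ℕ), ∀ n ∈ Hindman.FS a, (∀ i, 1 ≤ a.get i) → 1 ≤ n := by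
    intro a n hn
    induction hn with
    | head' a => intro ha; exact ha 0
    | tail' a m h ih => intro ha; exact ih fun i => ha (i + 1)
    | cons' a m h ih =>
      intro ha
      have := ih fun i => ha (i + 1)
      calc 1 ≤ m := this
        _ ≤ a.head + m := Nat.le_add_left _ _
  set ones : Stream' ℕ := fun _ => 1 with hones
  have honespos : ∀ i, 1 ≤ ones.get i := fun _ => le_refl 1
  have hcov : Hindman.FS ones ⊆
      ⋃₀ (Set.range fun v : Fin r => {n : ℕ | 1 ≤ n ∧ c n.bitIndices.toFinset = v}) := by
    intro n hn
    exact ⟨_, ⟨c n.bitIndices.toFinset, rfl⟩, keypos ones n hn honespos, rfl⟩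
  obtain ⟨C, hC, b, hFSb⟩ :=
    Hindman.FS_partition_regular ones _ (Set.finite_range _) hcov
  obtain ⟨v, rfl⟩ := hC
  have hbpos : ∀ i, 1 ≤ b.get i := fun i => (hFSb (Hindman.FS.singleton b i)).1
  obtain ⟨X, I, p, B, h1, h2, h3, h4, h5, h6, h7⟩ := build_blocks b hbpos m
  refine ⟨X, v, h1, h3, ?_⟩
  intro s hs hsm
  have hdisjI : (↑s : Set ℕ).PairwiseDisjoint I := by
    intro i hi j hj hij
    rcases lt_or_gt_of_ne hij with h | h
    · exact Finset.disjoint_left.mpr fun x hxi hxj =>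
        absurd (h6 i j h (hsm j hj) x hxi x hxj) (lt_irrefl x)
    · exact Finset.disjoint_right.mpr fun x hxi hxj =>
        absurd (h6 j i h (hsm i hi) x hxi x hxj) (lt_irrefl x)
  have hdisjX : (↑s : Set ℕ).PairwiseDisjoint X := by
    intro i hi j hj hij
    rcases lt_or_gt_of_ne hij with h | h
    · exact Finset.disjoint_left.mpr fun x hxi hxj =>
        absurd (h3 i j h (hsm j hj) x hxi x hxj) (lt_irrefl x)
    · exact Finset.disjoint_right.mpr fun x hxi hxj =>
        absurd (h3 j i h (hsm i hi) x hxi x hxj) (lt_irrefl x)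
  have hsum : ∑ j ∈ s.biUnion I, b.get j = ∑ a ∈ s.biUnion X, 2 ^ a := by
    rw [Finset.sum_biUnion hdisjI, Finset.sum_biUnion hdisjX]
    exact Finset.sum_congr rfl fun i hi => h7 i (hsm i hi)
  have hne : (s.biUnion I).Nonempty := by
    obtain ⟨i, hi⟩ := hs
    obtain ⟨x, hx⟩ := h4 i (hsm i hi)
    exact ⟨x, Finset.mem_biUnion.mpr ⟨i, hi, hx⟩⟩
  have hmem : (∑ j ∈ s.biUnion I, b.get j) ∈ Hindman.FS b :=
    Hindman.FS.finset_sum b _ hne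
  have hcol := (hFSb hmem).2
  rw [hsum, Finset.toFinset_bitIndices_twoPowSum] at hcol
  exact hcol

/-- For all `m` and `r ≥ 1` there is `N` such that for every `r`-coloring of the nonempty
subsets of `{0,…,N-1}` there is a block sequence `(x_i)_{i<m}` of nonempty subsets of
`{0,…,N-1}` on whose combinatorial space the coloring is min-determined: unions over index
sets with the same minimum get the same color. -/
theorem folkman_min_determined (m r : ℕ) (hr : 1 ≤ r) :
    ∃ N : ℕ, ∀ c : Finset ℕ → Fin r,
      ∃ X : ℕ → Finset ℕ,
        (∀ i < m, (X i).Nonempty ∧ ∀ a ∈ X i, a < N) ∧ IsBlockSeqS m X ∧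
        ∀ s t : Finset ℕ, ∀ hs : s.Nonempty, ∀ ht : t.Nonempty,
          (∀ i ∈ s, i < m) → (∀ i ∈ t, i < m) → s.min' hs = t.min' ht →
          c (s.biUnion X) = c (t.biUnion X) := by
  by_contra hcon
  have hsel : ∀ N : ℕ, ∃ cc : Finset ℕ → Fin r, ¬ ∃ X : ℕ → Finset ℕ,
      (∀ i < m, (X i).Nonempty ∧ ∀ a ∈ X i, a < N) ∧ IsBlockSeqS m X ∧
      ∀ s t : Finset ℕ, ∀ hs : s.Nonempty, ∀ ht : t.Nonempty,
        (∀ i ∈ s, i < m) → (∀ i ∈ t, i < m) → s.min' hs = t.min' ht →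
        cc (s.biUnion X) = cc (t.biUnion X) := by
    intro N
    by_contra h
    push_neg at h
    exact hcon ⟨N, h⟩
  choose cN hcN using hsel
  set U : Ultrafilter ℕ := Ultrafilter.of Filter.atTop with hU
  have hex : ∀ x : Finset ℕ, ∃ v : Fin r, {N | cN N x = v} ∈ U := by
    intro x
    by_contra h
    push_neg at h
    have hcompl : ∀ v : Fin r, {N | cN N x = v}ᶜ ∈ U := fun v =>
      Ultrafilter.compl_mem_iff_notMem.mpr (h v)
    have h2 : (⋂ v : Fin r, {N | cN N x = v}ᶜ) ∈ U := Filter.iInter_mem.mpr hcompl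
    obtain ⟨N, hN⟩ := Ultrafilter.nonempty_of_mem h2
    simp only [Set.mem_iInter, Set.mem_compl_iff, Set.mem_setOf_eq] at hN
    exact hN (cN N x) rfl
  choose cU hcU using hex
  obtain ⟨X, v, hXne, hXblk, hXmono⟩ := exists_mono_blocks r cU hr m
  set P : Finset (Finset ℕ) := (Finset.range m).powerset.filter (fun s => s.Nonempty) with hP
  set Bnd : ℕ := (((Finset.range m).biUnion X).sup id) + 1 with hBnd
  have hT : ((⋂ s ∈ P, {N | cN N (s.biUnion X) = cU (s.biUnion X)}) ∩ {N | Bnd ≤ N}) ∈ U := by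
    apply Filter.inter_mem
    · exact (Filter.biInter_finset_mem P).mpr fun s _ => hcU (s.biUnion X)
    · exact Ultrafilter.of_le Filter.atTop (Filter.mem_atTop Bnd)
  obtain ⟨N, hN1, hN2⟩ := Ultrafilter.nonempty_of_mem hT
  apply hcN N
  refine ⟨X, ?_, hXblk, ?_⟩
  · intro i hi
    refine ⟨hXne i hi, fun a ha => ?_⟩
    have hmem : a ∈ (Finset.range m).biUnion X :=
      Finset.mem_biUnion.mpr ⟨i, Finset.mem_range.mpr hi, ha⟩
    have := Finset.le_sup (f := id) hmem
    have hBN : Bnd ≤ N := hN2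
    simp only [id] at this
    omega
  · intro s t hs ht hsm htm _
    have hsP : s ∈ P := Finset.mem_filter.mpr
      ⟨Finset.mem_powerset.mpr fun i hi => Finset.mem_range.mpr (hsm i hi), hs⟩
    have htP : t ∈ P := Finset.mem_filter.mpr
      ⟨Finset.mem_powerset.mpr fun i hi => Finset.mem_range.mpr (htm i hi), ht⟩
    have h1 : cN N (s.biUnion X) = cU (s.biUnion X) := Set.mem_iInter₂.mp hN1 s hsP
    have h2 : cN N (t.biUnion X) = cU (t.biUnion X) := Set.mem_iInter₂.mp hN1 t htP
    rw [h1, h2, hXmono s hs hsm, hXmono t ht htm]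
end
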